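/- arXiv:1909.00207 — 5 statements merged into one kernel-verified Lean document; each statement's English description precedes it below -/
import Mathlib

section
/- For all q, the total numbers of planes in PG(3,q) meeting the twisted cubic C in exactly d points are: n0 = q(q^2-1)/3 planes with d=0, n1 = (q^3+q+2)/2 planes with d=1, n2 = q(q+1) planes with d=2, and n3 = q(q^2-1)/6 planes with d=3; these sum to q^3+q^2+q+1, the total number of planes of PG(3,q). -/
open Projectivization

noncomputable section

variable (F : Type*) [Field F]

lemma cubic_ne_zero (t : F) : ![t^3, t^2, t, 1] ≠ 0 := by
  intro h; have := congrFun h 3; simp at this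

lemma e0_ne_zero : (![1, 0, 0, 0] : Fin 4 → F) ≠ 0 := by
  intro h; have := congrFun h 0; simp at this

/-- The twisted cubic in `PG(3,q)`, in canonical form. -/
def twistedCubic : Set (Projectivization F (Fin 4 → F)) :=
  {x | (∃ t : F, x = Projectivization.mk F ![t^3, t^2, t, 1] (cubic_ne_zero F t)) ∨
    x = Projectivization.mk F ![1, 0, 0, 0] (e0_ne_zero F)}

/-- The set of projective points lying in a linear subspace `W`. -/
def planePts (W : Submodule F (Fin 4 → F)) : Set (Projectivization F (Fin 4 → F)) :=
  {x | x.submodule ≤ W}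

namespace TwistedCubicAux

open Polynomial Finset Module

/-- The affine/infinite parametrization of the twisted cubic at the vector level. -/
def vecO : Option F → (Fin 4 → F)
  | some t => ![t^3, t^2, t, 1]
  | none => ![1, 0, 0, 0]

lemma vecO_ne_zero (o : Option F) : vecO F o ≠ 0 := by
  cases o with
  | none => intro h; have := congrFun h 0; simp [vecO] at this
  | some t => intro h; have := congrFun h 3; simp [vecO] at this

/-- Pairing a vanishing linear combination with a polynomial of degree ≤ 3. -/
lemma pairing (s : Finset (Option F)) (c : Option F → F)
    (h : ∑ o ∈ s, c o • vecO F o = 0) (P : Polynomial F) (hP : P.natDegree ≤ 3) :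
    ∑ o ∈ s, c o * (o.elim (P.coeff 3) (fun t => P.eval t)) = 0 := by
  have hcoord : ∀ i : Fin 4, ∑ o ∈ s, c o * vecO F o i = 0 := by
    intro i
    have h2 := congrFun h i
    rw [Finset.sum_apply] at h2
    simpa using h2
  have key : ∀ o : Option F, (o.elim (P.coeff 3) fun t => P.eval t)
      = ∑ i : Fin 4, P.coeff (3 - (i : ℕ)) * vecO F o i := by
    rintro (_ | t)
    · simp [vecO, Fin.sum_univ_four]
    · rw [Option.elim, Polynomial.eval_eq_sum_range' (n := 4) (by omega)]
      simp [vecO, Fin.sum_univ_four, Finset.sum_range_succ, show ((3:Fin 4):ℕ) = 3 from rfl]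
      ring
  calc ∑ o ∈ s, c o * (o.elim (P.coeff 3) fun t => P.eval t)
      = ∑ o ∈ s, ∑ i : Fin 4, P.coeff (3 - (i:ℕ)) * (c o * vecO F o i) := by
        refine Finset.sum_congr rfl fun o _ => ?_
        rw [key, Finset.mul_sum]
        exact Finset.sum_congr rfl fun i _ => by ring
    _ = ∑ i : Fin 4, P.coeff (3 - (i:ℕ)) * ∑ o ∈ s, c o * vecO F o i := by
        rw [Finset.sum_comm]
        exact Finset.sum_congr rfl fun i _ => by rw [Finset.mul_sum]
    _ = 0 := by simp [hcoord]

/-- Any at most four of the vectors `vecO o` are linearly independent. -/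
lemma vecO_indep (s : Finset (Option F)) (hs : s.card ≤ 4) (c : Option F → F)
    (h : ∑ o ∈ s, c o • vecO F o = 0) : ∀ o ∈ s, c o = 0 := by
  classical
  set T : Finset F := s.eraseNone with hT
  have hmemT : ∀ t : F, t ∈ T ↔ some t ∈ s := fun t => Finset.mem_eraseNone
  have hTcard : T.card ≤ s.card := by
    have : T.image some = s.erase none := Finset.image_some_eraseNone s
    calc T.card = (T.image some).card :=
          (Finset.card_image_of_injective _ (Option.some_injective F)).symm
      _ ≤ s.card := by rw [this]; exact Finset.card_erase_le
  -- step 1 : c none = 0 when none ∈ s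
  have hnone : none ∈ s → c none = 0 := by
    intro hn
    have hTc3 : T.card ≤ 3 := by
      have h2 : (s.erase none).card = s.card - 1 := Finset.card_erase_of_mem hn
      have h3 : T.card = (s.erase none).card := by
        rw [← Finset.image_some_eraseNone s]
        exact (Finset.card_image_of_injective _ (Option.some_injective F)).symm
      omega
    set P : Polynomial F := X ^ (3 - T.card) * ∏ t ∈ T, (X - C t) with hPdef
    have hmonic : P.Monic :=
      (monic_X_pow _).mul (monic_prod_of_monic _ _ fun t _ => monic_X_sub_C t)
    have hdeg : P.natDegree = 3 := by
      rw [hPdef, natDegree_mul (monic_X_pow (R := F) (3 - T.card)).ne_zero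
          (monic_prod_of_monic _ _ fun t _ => monic_X_sub_C t).ne_zero,
        natDegree_X_pow, natDegree_prod _ _ fun t _ => (monic_X_sub_C t).ne_zero]
      simp only [natDegree_X_sub_C, Finset.sum_const, smul_eq_mul, mul_one]
      omega
    have hc3 : P.coeff 3 = 1 := by
      have := hmonic.coeff_natDegree
      rwa [hdeg] at this
    have hp := pairing F s c h P (le_of_eq hdeg)
    rw [Finset.sum_eq_single_of_mem none hn ?side] at hp
    · simpa [hc3] using hp
    · rintro (_ | t) hts hne
      · exact absurd rfl hne
      · have ht : t ∈ T := (hmemT t).2 hts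
        have : P.eval t = 0 := by
          rw [hPdef]
          simp [eval_prod, Finset.prod_eq_zero ht]
        simp [this]
  -- step 2 : finite coefficients
  rintro (_ | t₀) hmem
  · exact hnone hmem
  · have ht₀ : t₀ ∈ T := (hmemT t₀).2 hmem
    set P : Polynomial F := ∏ t ∈ T.erase t₀, (X - C t) with hPdef
    have hdeg : P.natDegree ≤ 3 := by
      rw [hPdef, natDegree_prod _ _ fun t _ => (monic_X_sub_C t).ne_zero]
      simp only [natDegree_X_sub_C, Finset.sum_const, smul_eq_mul, mul_one]
      have := Finset.card_erase_of_mem ht₀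
      omega
    have hp := pairing F s c h P hdeg
    rw [Finset.sum_eq_single_of_mem (some t₀) hmem ?side2] at hp
    · have hne : P.eval t₀ ≠ 0 := by
        rw [hPdef, eval_prod]
        refine Finset.prod_ne_zero_iff.2 fun t ht => ?_
        have : t ≠ t₀ := Finset.ne_of_mem_erase ht
        simp [sub_ne_zero.2 (Ne.symm this)]
      simp only [Option.elim] at hp
      exact (mul_eq_zero.1 hp).resolve_right hne
    · rintro (_ | t) hts hne
      · simp [hnone hts]
      · have ht : t ∈ T := (hmemT t).2 hts
        have htne : t ≠ t₀ := fun hh => hne (by rw [hh])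
        have : P.eval t = 0 := by
          rw [hPdef]
          simp [eval_prod, Finset.prod_eq_zero (Finset.mem_erase.2 ⟨htne, ht⟩)]
        simp [this]

lemma finrank_span_vecO (s : Finset (Option F)) (hs : s.card ≤ 4) :
    finrank F (Submodule.span F (vecO F '' ↑s)) = s.card := by
  classical
  have hli : LinearIndependent F (fun o : {x // x ∈ s} => vecO F o.1) := by
    rw [Fintype.linearIndependent_iff]
    intro g hg i
    set c : Option F → F := fun o => if h : o ∈ s then g ⟨o, h⟩ else 0 with hc
    have hsum : ∑ o ∈ s, c o • vecO F o = 0 := by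
      rw [← Finset.sum_attach s (fun o => c o • vecO F o)]
      simpa [hc] using hg
    have := vecO_indep F s hs c hsum i.1 i.2
    simpa [hc, i.2] using this
  have h1 := finrank_span_eq_card hli
  have h2 : Set.range (fun o : {x // x ∈ s} => vecO F o.1) = vecO F '' ↑s := by
    ext x; simp [Set.mem_image]
  rw [h2] at h1
  rw [h1, Fintype.card_coe]

/-- the projective point attached to `o` -/
def mkO (o : Option F) : Projectivization F (Fin 4 → F) :=
  Projectivization.mk F (vecO F o) (vecO_ne_zero F o)

lemma mkO_injective : Function.Injective (mkO F) := by
  intro o o' h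
  rw [mkO, mkO, Projectivization.mk_eq_mk_iff] at h
  obtain ⟨a, ha⟩ := h
  match o, o' with
  | none, none => rfl
  | some t, none =>
      have := congrFun ha 3
      simp [vecO, Units.smul_def] at this
  | none, some t =>
      have := congrFun ha 3
      simp [vecO, Units.smul_def] at this
  | some t, some t' =>
      have h3 := congrFun ha 3
      simp [vecO, Units.smul_def] at h3
      have h2 := congrFun ha 2
      simp [vecO, Units.smul_def, h3] at h2
      rw [h2]

lemma mkO_mem_planePts (o : Option F) (W : Submodule F (Fin 4 → F)) :
    mkO F o ∈ planePts F W ↔ vecO F o ∈ W := by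
  rw [planePts, Set.mem_setOf_eq, mkO, Projectivization.submodule_mk,
    Submodule.span_singleton_le_iff_mem]

lemma inter_eq_image (W : Submodule F (Fin 4 → F)) :
    twistedCubic F ∩ planePts F W = mkO F '' {o : Option F | vecO F o ∈ W} := by
  ext x
  constructor
  · rintro ⟨hx, hW⟩
    rcases hx with ⟨t, rfl⟩ | rfl
    · have hx : Projectivization.mk F ![t^3, t^2, t, 1] (cubic_ne_zero F t) = mkO F (some t) := rfl
      rw [hx] at hW ⊢
      exact ⟨some t, (mkO_mem_planePts F _ W).1 hW, rfl⟩
    · have hx : Projectivization.mk F ![1,0,0,0] (e0_ne_zero F) = mkO F none := rfl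
      rw [hx] at hW ⊢
      exact ⟨none, (mkO_mem_planePts F _ W).1 hW, rfl⟩
  · rintro ⟨o, ho, rfl⟩
    refine ⟨?_, (mkO_mem_planePts F o W).2 ho⟩
    cases o with
    | some t => exact Or.inl ⟨t, rfl⟩
    | none => exact Or.inr rfl

lemma ncard_inter (W : Submodule F (Fin 4 → F)) :
    (twistedCubic F ∩ planePts F W).ncard = {o : Option F | vecO F o ∈ W}.ncard := by
  rw [inter_eq_image, Set.ncard_image_of_injective _ (mkO_injective F)]

lemma geom_nat (q : ℕ) (hq : 1 ≤ q) (n : ℕ) :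
    (∑ i ∈ Finset.range n, q ^ i) * (q - 1) = q ^ n - 1 := by
  induction n with
  | zero => simp
  | succ n ih =>
      have h1 : 1 ≤ q ^ n := Nat.one_le_pow _ _ (by omega)
      have h2 : 1 ≤ q ^ (n + 1) := Nat.one_le_pow _ _ (by omega)
      rw [Finset.sum_range_succ]
      zify [hq, h1, h2] at ih ⊢
      linear_combination ih

lemma eq_smul_of_ker_eq {V : Type*} [AddCommGroup V] [Module F V]
    (f g : V →ₗ[F] F) {v : V} (hv : f v = 1) (h : LinearMap.ker f = LinearMap.ker g) :
    g = g v • f := by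
  ext x
  have hx : x - f x • v ∈ LinearMap.ker f := by
    simp [LinearMap.mem_ker, hv]
  rw [h] at hx
  have hgx := LinearMap.mem_ker.1 hx
  rw [map_sub, map_smul, sub_eq_zero] at hgx
  simp only [LinearMap.smul_apply, smul_eq_mul]
  rw [hgx]; simp [mul_comm]

/-- The number of hyperplanes of an `n`-dimensional space over a field with `q` elements. -/
lemma count_hyperplanes [Fintype F] (q : ℕ) (hq : Fintype.card F = q) (V : Type*) [AddCommGroup V]
    [Module F V] [FiniteDimensional F V] [Finite V] {n : ℕ} (hn : finrank F V = n) (h1 : 1 ≤ n) :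
    Nat.card {W : Submodule F V // finrank F W = n - 1} = ∑ i ∈ Finset.range n, q ^ i := by
  classical
  haveI : Fintype V := Fintype.ofFinite V
  haveI : Finite (V →ₗ[F] F) := Finite.of_injective _ (DFunLike.coe_injective (F := V →ₗ[F] F))
  haveI : Fintype (V →ₗ[F] F) := Fintype.ofFinite _
  haveI : Fintype (Submodule F V) := Fintype.ofFinite _
  have hq2 : 2 ≤ q := hq ▸ Fintype.one_lt_card
  set D : Finset (V →ₗ[F] F) := univ.filter (fun f => f ≠ 0) with hD
  set H : Finset (Submodule F V) := univ.filter (fun W => finrank F W = n - 1) with hH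
  have hmap : ∀ f ∈ D, LinearMap.ker f ∈ H := by
    intro f hf
    rw [hD, Finset.mem_filter] at hf
    have hrange : LinearMap.range f = ⊤ := by
      obtain ⟨w, hw⟩ := DFunLike.ne_iff.1 hf.2
      simp only [LinearMap.zero_apply] at hw
      rw [eq_top_iff]
      rintro c -
      refine ⟨(c * (f w)⁻¹) • w, ?_⟩
      rw [map_smul, smul_eq_mul]
      field_simp
    have := LinearMap.finrank_range_add_finrank_ker f
    rw [hrange, finrank_top, finrank_self, hn] at this
    rw [hH, Finset.mem_filter]
    exact ⟨Finset.mem_univ _, by omega⟩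
  have hcard : D.card = ∑ W ∈ H, (D.filter (fun f => LinearMap.ker f = W)).card :=
    Finset.card_eq_sum_card_fiberwise hmap
  have hfiber : ∀ W ∈ H, (D.filter (fun f => LinearMap.ker f = W)).card = q - 1 := by
    intro W hW
    rw [hH, Finset.mem_filter] at hW
    have hq1 : finrank F (V ⧸ W) = 1 := by
      have := Submodule.finrank_quotient_add_finrank W
      rw [hn, hW.2] at this; omega
    obtain ⟨e⟩ : Nonempty ((V ⧸ W) ≃ₗ[F] F) :=
      FiniteDimensional.nonempty_linearEquiv_of_finrank_eq (by rw [hq1, finrank_self])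
    set f₀ : V →ₗ[F] F := e.toLinearMap ∘ₗ W.mkQ with hf₀
    have hker₀ : LinearMap.ker f₀ = W := by
      rw [hf₀, LinearMap.ker_comp, LinearEquiv.ker, Submodule.comap_bot, Submodule.ker_mkQ]
    have hne₀ : f₀ ≠ 0 := by
      intro h0
      have : LinearMap.ker f₀ = ⊤ := by rw [h0]; exact LinearMap.ker_zero
      rw [hker₀] at this
      rw [this, finrank_top, hn] at hW
      omega
    obtain ⟨w, hw⟩ := DFunLike.ne_iff.1 hne₀
    set v₀ : V := (f₀ w)⁻¹ • w with hv₀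
    have hfv : f₀ v₀ = 1 := by
      rw [hv₀, map_smul, smul_eq_mul, inv_mul_cancel₀]
      simpa using hw
    rw [show q - 1 = (univ.filter (fun c : F => c ≠ 0)).card by
      rw [Finset.filter_ne' univ (0:F), Finset.card_erase_of_mem (Finset.mem_univ _),
        Finset.card_univ, hq]]
    apply Finset.card_bij (fun f _ => f v₀)
    · intro f hf
      rw [Finset.mem_filter] at hf ⊢
      obtain ⟨hfD, hkf⟩ := hf
      rw [hD, Finset.mem_filter] at hfD
      refine ⟨Finset.mem_univ _, ?_⟩
      intro h0
      have := eq_smul_of_ker_eq F f₀ f hfv (by rw [hker₀, hkf])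
      rw [h0, zero_smul] at this
      exact hfD.2 this
    · intro f hf f' hf' hval
      rw [Finset.mem_filter] at hf hf'
      have h1 := eq_smul_of_ker_eq F f₀ f hfv (by rw [hker₀, hf.2])
      have h2 := eq_smul_of_ker_eq F f₀ f' hfv (by rw [hker₀, hf'.2])
      rw [h1, h2, hval]
    · intro c hc
      rw [Finset.mem_filter] at hc
      refine ⟨c • f₀, ?_, by simp [hfv]⟩
      rw [Finset.mem_filter, hD, Finset.mem_filter]
      refine ⟨⟨Finset.mem_univ _, ?_⟩, ?_⟩
      · intro h0
        have := congrFun (congrArg DFunLike.coe h0) v₀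
        simp [hfv] at this
        exact hc.2 this
      · rw [LinearMap.ker_smul f₀ c hc.2, hker₀]
  have hDcard : D.card = q ^ n - 1 := by
    rw [hD, Finset.filter_ne' univ (0 : V →ₗ[F] F), Finset.card_erase_of_mem (Finset.mem_univ _),
      Finset.card_univ]
    congr 1
    rw [card_eq_pow_finrank (K := F) (V := V →ₗ[F] F), hq]
    congr 1
    exact (Subspace.dual_finrank_eq (K := F) (V := V)).trans hn
  have hsum : H.card * (q - 1) = q ^ n - 1 := by
    rw [← hDcard, hcard, Finset.sum_congr rfl hfiber, Finset.sum_const, smul_eq_mul]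
  have hHcard : H.card = ∑ i ∈ Finset.range n, q ^ i := by
    have hpos : 0 < q - 1 := by omega
    apply Nat.eq_of_mul_eq_mul_right hpos
    rw [hsum, geom_nat q (by omega) n]
  rw [Nat.card_eq_fintype_card, Fintype.card_subtype]
  exact hHcard

lemma finrank_comap_mkQ {V : Type*} [AddCommGroup V] [Module F V] [FiniteDimensional F V]
    (U : Submodule F V) (W' : Submodule F (V ⧸ U)) :
    finrank F (W'.comap U.mkQ) = finrank F W' + finrank F U := by
  set X := W'.comap U.mkQ with hX
  have hUX : U ≤ X := by
    intro u hu
    rw [hX, Submodule.mem_comap, Submodule.mkQ_apply, (Submodule.Quotient.mk_eq_zero U).2 hu]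
    exact W'.zero_mem
  set g : X →ₗ[F] V ⧸ U := U.mkQ.domRestrict X with hg
  have hker : LinearMap.ker g = U.comap X.subtype := by
    ext x
    simp [hg, LinearMap.mem_ker, LinearMap.domRestrict_apply, Submodule.mkQ_apply,
      Submodule.Quotient.mk_eq_zero, Submodule.mem_comap]
  have hrange : LinearMap.range g = W' := by
    ext y
    constructor
    · rintro ⟨⟨x, hx⟩, rfl⟩
      exact hx
    · intro hy
      obtain ⟨x, rfl⟩ := U.mkQ_surjective y
      exact ⟨⟨x, by rwa [hX, Submodule.mem_comap]⟩, rfl⟩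
  have := LinearMap.finrank_range_add_finrank_ker g
  rw [hker, hrange] at this
  have he : finrank F (U.comap X.subtype) = finrank F U :=
    (Submodule.comapSubtypeEquivOfLe hUX).finrank_eq
  rw [he] at this
  rw [← this]

/-- The number of planes of `PG(3,q)` through a fixed `k`-dimensional subspace. -/
lemma count_planes_through [Fintype F] (q : ℕ) (hq : Fintype.card F = q)
    (U : Submodule F (Fin 4 → F)) {k : ℕ} (hU : finrank F U = k) (hk : k ≤ 3) :
    Nat.card {W : Submodule F (Fin 4 → F) // finrank F W = 3 ∧ U ≤ W}
      = ∑ i ∈ Finset.range (4 - k), q ^ i := by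
  classical
  have h4 : finrank F (Fin 4 → F) = 4 := by simp
  have hQ : finrank F ((Fin 4 → F) ⧸ U) = 4 - k := by
    have := Submodule.finrank_quotient_add_finrank U
    rw [h4, hU] at this
    omega
  have hkey := count_hyperplanes F q hq ((Fin 4 → F) ⧸ U) hQ (by omega)
  rw [← hkey]
  apply Nat.card_congr
  have hcm : ∀ W : Submodule F (Fin 4 → F), U ≤ W →
      (W.map U.mkQ).comap U.mkQ = W := by
    intro W hW
    rw [Submodule.comap_map_mkQ, sup_eq_right.2 hW]
  refine ⟨fun W => ⟨W.1.map U.mkQ, ?_⟩, fun W' => ⟨W'.1.comap U.mkQ, ?_, ?_⟩, ?_, ?_⟩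
  · obtain ⟨W, hW3, hUW⟩ := W
    have h1 := finrank_comap_mkQ F U (W.map U.mkQ)
    rw [hcm W hUW, hW3, hU] at h1
    simp only
    omega
  · obtain ⟨W', hW'⟩ := W'
    have h1 := finrank_comap_mkQ F U W'
    rw [hW', hU] at h1
    simp only
    omega
  · obtain ⟨W', hW'⟩ := W'
    intro u hu
    rw [Submodule.mem_comap, Submodule.mkQ_apply, (Submodule.Quotient.mk_eq_zero U).2 hu]
    exact W'.zero_mem
  · rintro ⟨W, hW3, hUW⟩
    exact Subtype.ext (hcm W hUW)
  · rintro ⟨W', hW'⟩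
    exact Subtype.ext (Submodule.map_comap_eq_of_surjective U.mkQ_surjective W')

end TwistedCubicAux

set_option maxHeartbeats 2000000 in
open TwistedCubicAux Finset Module in
/-- The total numbers of planes of `PG(3,q)` meeting the twisted cubic `C` in exactly `d`
points are `q(q²-1)/3` for `d=0`, `(q³+q+2)/2` for `d=1`, `q(q+1)` for `d=2`, and
`q(q²-1)/6` for `d=3`; these sum to `q³+q²+q+1`, the total number of planes. -/
theorem stmt4 (q : ℕ) [Fintype F] (hq : Fintype.card F = q) :
    Nat.card {W : Submodule F (Fin 4 → F) // Module.finrank F W = 3 ∧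
        (twistedCubic F ∩ planePts F W).ncard = 0} = q * (q ^ 2 - 1) / 3 ∧
    Nat.card {W : Submodule F (Fin 4 → F) // Module.finrank F W = 3 ∧
        (twistedCubic F ∩ planePts F W).ncard = 1} = (q ^ 3 + q + 2) / 2 ∧
    Nat.card {W : Submodule F (Fin 4 → F) // Module.finrank F W = 3 ∧
        (twistedCubic F ∩ planePts F W).ncard = 2} = q * (q + 1) ∧
    Nat.card {W : Submodule F (Fin 4 → F) // Module.finrank F W = 3 ∧
        (twistedCubic F ∩ planePts F W).ncard = 3} = q * (q ^ 2 - 1) / 6 ∧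
    q * (q ^ 2 - 1) / 3 + (q ^ 3 + q + 2) / 2 + q * (q + 1) + q * (q ^ 2 - 1) / 6
      = q ^ 3 + q ^ 2 + q + 1 := by
  classical
  haveI : Fintype (Submodule F (Fin 4 → F)) := Fintype.ofFinite _
  have hq2 : 2 ≤ q := hq ▸ Fintype.one_lt_card
  set S : Submodule F (Fin 4 → F) → Finset (Option F) :=
    fun W => univ.filter (fun o => vecO F o ∈ W) with hS
  set Ω : Finset (Submodule F (Fin 4 → F)) := univ.filter (fun W => finrank F W = 3) with hΩ
  set n : ℕ → ℕ := fun d => (Ω.filter (fun W => (S W).card = d)).card with hn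
  have hncard : ∀ W : Submodule F (Fin 4 → F),
      (twistedCubic F ∩ planePts F W).ncard = (S W).card := by
    intro W
    rw [ncard_inter, show {o : Option F | vecO F o ∈ W} = ↑(S W) by ext o; simp [hS],
      Set.ncard_coe_finset]
  -- identification of the four subtype cardinalities
  have hid : ∀ d : ℕ, Nat.card {W : Submodule F (Fin 4 → F) // finrank F W = 3 ∧
      (twistedCubic F ∩ planePts F W).ncard = d} = n d := by
    intro d
    rw [Nat.card_eq_fintype_card, Fintype.card_subtype]
    simp only [hn, hΩ, Finset.filter_filter]
    congr 1
    apply Finset.filter_congr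
    intro W _
    rw [hncard W]
  -- counting planes through spans
  have hsub : ∀ s : Finset (Option F), s.card ≤ 3 →
      (Ω.filter (fun W => ∀ o ∈ s, vecO F o ∈ W)).card
        = ∑ i ∈ Finset.range (4 - s.card), q ^ i := by
    intro s hs
    have hU : finrank F (Submodule.span F (vecO F '' ↑s)) = s.card :=
      finrank_span_vecO F s (by omega)
    have hc := count_planes_through F q hq _ hU hs
    rw [← hc, Nat.card_eq_fintype_card, Fintype.card_subtype]
    simp only [hΩ, Finset.filter_filter]
    congr 1
    apply Finset.filter_congr
    intro W _
    have : Submodule.span F (vecO F '' ↑s) ≤ W ↔ ∀ o ∈ s, vecO F o ∈ W := by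
      rw [Submodule.span_le, Set.image_subset_iff]
      constructor
      · intro h o ho
        exact h ho
      · intro h o ho
        exact h o ho
    simp [this]
  have hΩcard : Ω.card = ∑ i ∈ Finset.range 4, q ^ i := by
    have hc := count_planes_through F q hq ⊥ (finrank_bot F _) (by norm_num)
    rw [Nat.card_eq_fintype_card, Fintype.card_subtype] at hc
    rw [show Ω = univ.filter (fun W : Submodule F (Fin 4 → F) => finrank F W = 3) from hΩ, ← hc]
    congr 1
    apply Finset.filter_congr
    intro W _
    simp
  -- the bound : no plane contains four points of the cubic
  have hbound : ∀ W ∈ Ω, (S W).card ≤ 3 := by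
    intro W hW
    by_contra hcon
    push_neg at hcon
    obtain ⟨s, hsub', hcard⟩ := Finset.exists_subset_card_eq (show 4 ≤ (S W).card from hcon)
    have h4 : finrank F (Submodule.span F (vecO F '' ↑s)) = 4 := by
      rw [finrank_span_vecO F s (le_of_eq hcard), hcard]
    have hle : Submodule.span F (vecO F '' ↑s) ≤ W := by
      rw [Submodule.span_le, Set.image_subset_iff]
      intro o ho
      have := hsub' ho
      simp only [hS, Finset.coe_filter, Finset.mem_filter, Finset.mem_univ, true_and] at this ⊢
      exact this
    have hmono := Submodule.finrank_mono hle
    rw [h4, (Finset.mem_filter.1 hW).2] at hmono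
    omega
  -- fiberwise decomposition
  have hfib : ∀ f : ℕ → ℕ, ∑ W ∈ Ω, f ((S W).card) = ∑ d ∈ Finset.range 4, n d * f d := by
    intro f
    rw [← Finset.sum_fiberwise_of_maps_to (g := fun W => (S W).card) (t := Finset.range 4)
      (fun W hW => by
        simp only [Finset.mem_range]
        exact Nat.lt_succ_of_le (hbound W hW)) (fun W => f ((S W).card))]
    refine Finset.sum_congr rfl fun d _ => ?_
    rw [Finset.sum_congr rfl (fun W hW => by rw [(Finset.mem_filter.1 hW).2]),
      Finset.sum_const, smul_eq_mul, hn]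
  -- incidence double counting
  have hchoose : ∀ j : ℕ, 1 ≤ j → j ≤ 3 →
      ∑ W ∈ Ω, ((S W).card.choose j)
        = (q+1).choose j * ∑ i ∈ Finset.range (4 - j), q ^ i := by
    intro j hj1 hj3
    have step1 : ∀ W : Submodule F (Fin 4 → F),
        (S W).card.choose j = (((univ : Finset (Option F)).powersetCard j).filter
          (fun s => s ⊆ S W)).card := by
      intro W
      rw [← Finset.card_powersetCard]
      congr 1
      ext a
      simp only [Finset.mem_powersetCard, Finset.mem_filter]
      constructor
      · rintro ⟨h1, h2⟩
        exact ⟨⟨Finset.subset_univ a, h2⟩, h1⟩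
      · rintro ⟨⟨_, h2⟩, h1⟩
        exact ⟨h1, h2⟩
    calc ∑ W ∈ Ω, (S W).card.choose j
        = ∑ W ∈ Ω, ∑ s ∈ (univ : Finset (Option F)).powersetCard j,
            if s ⊆ S W then 1 else 0 := by
          refine Finset.sum_congr rfl fun W _ => ?_
          rw [step1, Finset.card_filter]
      _ = ∑ s ∈ (univ : Finset (Option F)).powersetCard j, ∑ W ∈ Ω,
            if s ⊆ S W then 1 else 0 := Finset.sum_comm
      _ = ∑ s ∈ (univ : Finset (Option F)).powersetCard j,
            (Ω.filter (fun W => ∀ o ∈ s, vecO F o ∈ W)).card := by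
          refine Finset.sum_congr rfl fun s _ => ?_
          rw [Finset.card_filter]
          refine Finset.sum_congr rfl fun W _ => ?_
          congr 1
          simp only [eq_iff_iff]
          constructor
          · intro h o ho
            have := h ho
            simpa [hS] using this
          · intro h o ho
            simp only [hS, Finset.mem_filter, Finset.mem_univ, true_and]
            exact h o ho
      _ = ∑ s ∈ (univ : Finset (Option F)).powersetCard j,
            ∑ i ∈ Finset.range (4 - j), q ^ i := by
          refine Finset.sum_congr rfl fun s hs => ?_
          have hcard : s.card = j := (Finset.mem_powersetCard.1 hs).2
          rw [hsub s (by omega), hcard]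
      _ = (q+1).choose j * ∑ i ∈ Finset.range (4 - j), q ^ i := by
          rw [Finset.sum_const, Finset.card_powersetCard, Finset.card_univ,
            Fintype.card_option, hq, smul_eq_mul]
  -- the four linear equations
  have hgeom4 : ∑ i ∈ Finset.range 4, q ^ i = q^3 + q^2 + q + 1 := by
    simp [Finset.sum_range_succ]; ring
  have hgeom3 : ∑ i ∈ Finset.range 3, q ^ i = q^2 + q + 1 := by
    simp [Finset.sum_range_succ]; ring
  have hgeom2 : ∑ i ∈ Finset.range 2, q ^ i = q + 1 := by
    simp [Finset.sum_range_succ]; omega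
  have hgeom1 : ∑ i ∈ Finset.range 1, q ^ i = 1 := by simp
  have E0 : n 0 + n 1 + n 2 + n 3 = q^3 + q^2 + q + 1 := by
    have h := hfib (fun _ => 1)
    rw [Finset.sum_const, smul_eq_mul, mul_one, hΩcard, hgeom4] at h
    simp only [Finset.sum_range_succ, Finset.sum_range_zero, mul_one] at h
    linarith
  have E1 : n 1 + 2 * n 2 + 3 * n 3 = (q+1) * (q^2 + q + 1) := by
    have h := hfib (fun d => d.choose 1)
    have h2 := hchoose 1 (by norm_num) (by norm_num)
    rw [h] at h2
    rw [show (4:ℕ) - 1 = 3 from rfl, hgeom3] at h2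
    simp only [Finset.sum_range_succ, Finset.sum_range_zero, Nat.choose_one_right] at h2
    linarith
  have E2 : n 2 + 3 * n 3 = (q+1).choose 2 * (q + 1) := by
    have h := hfib (fun d => d.choose 2)
    have h2 := hchoose 2 (by norm_num) (by norm_num)
    rw [h] at h2
    rw [show (4:ℕ) - 2 = 2 from rfl, hgeom2] at h2
    simp only [Finset.sum_range_succ, Finset.sum_range_zero, show Nat.choose 0 2 = 0 by decide,
      show Nat.choose 1 2 = 0 by decide, show Nat.choose 2 2 = 1 by decide,
      show Nat.choose 3 2 = 3 by decide, mul_zero, mul_one, zero_add] at h2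
    linarith
  have E3 : n 3 = (q+1).choose 3 := by
    have h := hfib (fun d => d.choose 3)
    have h2 := hchoose 3 (by norm_num) (by norm_num)
    rw [h] at h2
    rw [show (4:ℕ) - 3 = 1 from rfl, hgeom1, mul_one] at h2
    simp only [Finset.sum_range_succ, Finset.sum_range_zero, show Nat.choose 0 3 = 0 by decide,
      show Nat.choose 1 3 = 0 by decide, show Nat.choose 2 3 = 0 by decide,
      show Nat.choose 3 3 = 1 by decide, mul_zero, mul_one, zero_add] at h2
    linarith
  -- choose identities
  have hq1 : 1 ≤ q := by omega
  have hB2 : (q+1).choose 2 * 2 = (q+1) * q := by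
    have := Nat.add_one_mul_choose_eq q 1
    simpa [Nat.choose_one_right, mul_comm] using this.symm
  have hC2 : q.choose 2 * 2 = q * (q-1) := by
    obtain ⟨r, rfl⟩ : ∃ r, q = r + 1 := ⟨q - 1, by omega⟩
    have := Nat.add_one_mul_choose_eq r 1
    simpa [Nat.choose_one_right, mul_comm] using this.symm
  have hA3 : (q+1).choose 3 * 3 = (q+1) * q.choose 2 := by
    have := Nat.add_one_mul_choose_eq q 2
    simpa using this.symm
  -- integer versions
  have z1 : (2 : ℤ) * (q.choose 2 : ℤ) = q * (q - 1) := by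
    have := hC2
    zify [hq1] at this
    linarith
  have z2 : (3 : ℤ) * ((q+1).choose 3 : ℤ) = (q+1) * (q.choose 2 : ℤ) := by
    exact_mod_cast by zify at hA3; linarith [hA3]
  have z3 : (2 : ℤ) * ((q+1).choose 2 : ℤ) = (q+1) * q := by
    zify at hB2; linarith [hB2]
  have zE3 : ((n 3 : ℤ)) = ((q+1).choose 3 : ℤ) := by exact_mod_cast E3
  have hn3z : (6 : ℤ) * (n 3) = q * (q+1) * (q-1) := by
    linear_combination 6 * zE3 + 2 * z2 + ((q : ℤ)+1) * z1
  have zE2 : ((n 2 : ℤ)) + 3 * (n 3) = ((q+1).choose 2 : ℤ) * (q+1) := by exact_mod_cast E2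
  have hn2z : ((n 2 : ℤ)) = q * (q+1) := by
    have h2 : (2 : ℤ) * (n 2) = 2 * (q * (q+1)) := by
      linear_combination 2 * zE2 + ((q:ℤ)+1) * z3 - hn3z
    linarith
  have zE1 : ((n 1 : ℤ)) + 2 * (n 2) + 3 * (n 3) = ((q:ℤ)+1) * (q^2+q+1) := by exact_mod_cast E1
  have hn1z : (2 : ℤ) * (n 1) = q^3 + q + 2 := by
    linear_combination 2 * zE1 - 4 * hn2z - hn3z
  have zE0 : ((n 0 : ℤ)) + (n 1) + (n 2) + (n 3) = (q:ℤ)^3 + q^2 + q + 1 := by exact_mod_cast E0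
  have hn0z : (3 : ℤ) * (n 0) = q * (q^2 - 1) := by
    have h6 : (6 : ℤ) * (n 0) = 2 * (q * (q^2-1)) := by
      linear_combination 6 * zE0 - 3 * hn1z - 6 * hn2z - hn3z
    linarith
  -- back to ℕ
  have hq21 : 1 ≤ q ^ 2 := Nat.one_le_pow _ _ (by omega)
  have hnat0 : q * (q^2 - 1) = 3 * n 0 := by
    zify [hq21]
    linarith [hn0z]
  have hnat1 : q^3 + q + 2 = 2 * n 1 := by
    zify
    linarith [hn1z]
  have hnat2 : n 2 = q * (q + 1) := by exact_mod_cast hn2z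
  have hnat3 : q * (q^2 - 1) = 6 * n 3 := by
    zify [hq21]
    linarith [hn3z]
  refine ⟨?_, ?_, ?_, ?_, ?_⟩
  · rw [hid 0, hnat0, Nat.mul_div_cancel_left _ (by norm_num)]
  · rw [hid 1, hnat1, Nat.mul_div_cancel_left _ (by norm_num)]
  · rw [hid 2, hnat2]
  · rw [hid 3, hnat3, Nat.mul_div_cancel_left _ (by norm_num)]
  · have d0 : q * (q^2-1) / 3 = n 0 := by
      rw [hnat0, Nat.mul_div_cancel_left _ (by norm_num : 0 < 3)]
    have d1 : (q^3+q+2) / 2 = n 1 := by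
      rw [hnat1, Nat.mul_div_cancel_left _ (by norm_num : 0 < 2)]
    have d3 : q * (q^2-1) / 6 = n 3 := by
      rw [hnat3, Nat.mul_div_cancel_left _ (by norm_num : 0 < 6)]
    rw [d0, d1, d3, ← hnat2]
    exact E0
end
end

section
/- For any point A of PG(3,q) off the twisted cubic C, let n_d(A) be the number of planes through A meeting C in exactly d points. If A does not lie on any real chord of C then n_2(A) + 3·n_3(A) = C(q+1,2) = q(q+1)/2, while if A lies on a real chord then n_2(A) + 3·n_3(A) = (q^2+3q)/2. -/
open Projectivization

noncomputable section

variable (F : Type*) [Field F]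

open scoped Classical

namespace TCaux

variable {F}

def vv (o : Option F) : Fin 4 → F := o.elim ![1,0,0,0] (fun t => ![t^3,t^2,t,1])

lemma vv_ne_zero (o : Option F) : vv o ≠ 0 := by
  cases o with
  | none => exact e0_ne_zero F
  | some t => exact cubic_ne_zero F t

lemma vv_apply_some (t : F) (j : Fin 4) : vv (some t) j = t ^ (3 - (j : ℕ)) := by
  fin_cases j <;> simp [vv]

lemma vv_apply_none (j : Fin 4) : vv (none : Option F) j = if j = 0 then 1 else 0 := by
  fin_cases j <;> simp [vv]

lemma vv_li {k : ℕ} (hk : k ≤ 4) (f : Fin k → Option F) (hf : Function.Injective f) :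
    LinearIndependent F (fun i => vv (f i)) := by
  rw [Fintype.linearIndependent_iff]
  intro c hc
  have hc' : ∀ j : Fin 4, ∑ i, c i * vv (f i) j = 0 := by
    intro j
    have := congrFun hc j
    simpa using this
  by_cases hnone : ∃ i0, f i0 = none
  · obtain ⟨i0, hi0⟩ := hnone
    cases k with
    | zero => exact fun i => i.elim0
    | succ m =>
      have hm : m ≤ 3 := by omega
      have hne : ∀ j : Fin m, f (i0.succAbove j) ≠ none := by
        intro j h
        exact (Fin.succAbove_ne i0 j) (hf (h.trans hi0.symm))
      set g : Fin m → F := fun j => (f (i0.succAbove j)).getD 0 with hg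
      have hfg : ∀ j, f (i0.succAbove j) = some (g j) := by
        intro j
        rcases hj : f (i0.succAbove j) with _ | t
        · exact absurd hj (hne j)
        · simp [hg, hj]
      have hginj : Function.Injective g := by
        intro a b hab
        have : f (i0.succAbove a) = f (i0.succAbove b) := by rw [hfg, hfg, hab]
        exact Fin.succAbove_right_injective (hf this)
      have key : ∀ e : ℕ, e ≤ 2 → ∑ j : Fin m, c (i0.succAbove j) * g j ^ e = 0 := by
        intro e he
        have hj4 : 3 - e < 4 := by omega
        have h1 := hc' ⟨3 - e, hj4⟩
        rw [Fin.sum_univ_succAbove _ i0, hi0, vv_apply_none] at h1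
        have h30 : (⟨3 - e, hj4⟩ : Fin 4) ≠ 0 := by
          intro h
          have h' := congrArg Fin.val h
          simp only [Fin.val_zero] at h'
          omega
        rw [if_neg h30, mul_zero, zero_add] at h1
        have he' : 3 - ((⟨3 - e, hj4⟩ : Fin 4) : ℕ) = e := by
          show 3 - (3 - e) = e; omega
        calc ∑ j : Fin m, c (i0.succAbove j) * g j ^ e
            = ∑ j : Fin m, c (i0.succAbove j) * vv (f (i0.succAbove j)) ⟨3 - e, hj4⟩ := by
              refine Finset.sum_congr rfl fun j _ => ?_
              rw [hfg j, vv_apply_some, he']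
          _ = 0 := h1
      have hzero : (fun j : Fin m => c (i0.succAbove j)) = 0 := by
        apply Matrix.eq_zero_of_forall_pow_sum_mul_pow_eq_zero hginj
        intro i
        exact key i (by omega)
      intro i
      rcases eq_or_ne i0 i with rfl | hne2
      · have h1 := hc' 0
        rw [Fin.sum_univ_succAbove _ i0, hi0, vv_apply_none, if_pos rfl, mul_one] at h1
        have : ∀ j : Fin m, c (i0.succAbove j) * vv (f (i0.succAbove j)) 0 = 0 := by
          intro j
          rw [congrFun hzero j]
          · exact zero_mul _
        rw [Finset.sum_congr rfl (fun j _ => this j), Finset.sum_const_zero, add_zero] at h1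
        exact h1
      · obtain ⟨j, rfl⟩ := Fin.exists_succAbove_eq (Ne.symm hne2)
        exact congrFun hzero j
  · push_neg at hnone
    set t : Fin k → F := fun i => (f i).getD 0 with ht
    have hft : ∀ i, f i = some (t i) := by
      intro i
      rcases hi : f i with _ | s
      · exact absurd hi (hnone i)
      · simp [ht, hi]
    have htinj : Function.Injective t := fun a b hab => hf (by rw [hft, hft, hab])
    have key : ∀ e : ℕ, e ≤ 3 → ∑ i, c i * t i ^ e = 0 := by
      intro e he
      have hj4 : 3 - e < 4 := by omega
      have h1 := hc' ⟨3 - e, hj4⟩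
      have he' : 3 - ((⟨3 - e, hj4⟩ : Fin 4) : ℕ) = e := by
        show 3 - (3 - e) = e; omega
      calc ∑ i, c i * t i ^ e
          = ∑ i, c i * vv (f i) ⟨3 - e, hj4⟩ := by
            refine Finset.sum_congr rfl fun i _ => ?_
            rw [hft i, vv_apply_some, he']
        _ = 0 := h1
    have := Matrix.eq_zero_of_forall_pow_sum_mul_pow_eq_zero htinj
      (fun i : Fin k => key i (by omega))
    exact fun i => congrFun this i


def cpt (o : Option F) : Projectivization F (Fin 4 → F) :=
  Projectivization.mk F (vv o) (vv_ne_zero o)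

lemma twistedCubic_eq_range : twistedCubic F = Set.range (cpt (F := F)) := by
  ext x
  constructor
  · rintro (⟨t, rfl⟩ | rfl)
    · exact ⟨some t, rfl⟩
    · exact ⟨none, rfl⟩
  · rintro ⟨o, rfl⟩
    rcases o with _ | t
    · exact Or.inr rfl
    · exact Or.inl ⟨t, rfl⟩

lemma cpt_injective : Function.Injective (cpt (F := F)) := by
  intro o1 o2 h
  by_contra hne
  have hinj : Function.Injective ![o1, o2] := by
    intro i j hij
    fin_cases i <;> fin_cases j <;> simp_all
  have hli := vv_li (k := 2) (by norm_num) ![o1, o2] hinj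
  obtain ⟨a, ha⟩ := (Projectivization.mk_eq_mk_iff' F _ _ (vv_ne_zero o1) (vv_ne_zero o2)).mp h
  have := Fintype.linearIndependent_iff.mp hli ![1, -a] ?_ 0
  · simp at this
  · rw [Fin.sum_univ_two]
    simp only [Matrix.cons_val_zero, Matrix.cons_val_one, Matrix.head_cons, one_smul, neg_smul]
    rw [← ha]
    abel

lemma submodule_cpt (o : Option F) : (cpt o).submodule = Submodule.span F {vv o} :=
  Projectivization.submodule_mk _ _

lemma li_subtype (s : Finset (Option F)) (hs : s.card ≤ 4) :
    LinearIndependent F (fun o : s => vv (o : Option F)) := by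
  have := vv_li (k := s.card) hs (Subtype.val ∘ s.equivFin.symm)
    (Subtype.val_injective.comp s.equivFin.symm.injective)
  exact (linearIndependent_equiv s.equivFin.symm).mp this

lemma finrank_span_parms (s : Finset (Option F)) (hs : s.card ≤ 4) :
    Module.finrank F (Submodule.span F (vv '' (s : Set (Option F)))) = s.card := by
  have h := li_subtype s hs
  have himg : vv '' (s : Set (Option F)) = Set.range (fun o : s => vv (o : Option F)) :=
    Set.image_eq_range _ _
  rw [himg, finrank_span_eq_card h, Fintype.card_coe]

lemma mem_span_iff_le (o : Option F) (W : Submodule F (Fin 4 → F)) :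
    (cpt o).submodule ≤ W ↔ vv o ∈ W := by
  rw [submodule_cpt, Submodule.span_singleton_le_iff_mem]

lemma sup_pair (o1 o2 : Option F) :
    (cpt o1).submodule ⊔ (cpt o2).submodule
      = Submodule.span F (vv '' (({o1, o2} : Finset (Option F)) : Set (Option F))) := by
  rw [submodule_cpt, submodule_cpt, ← Submodule.span_union]
  congr 1
  simp only [Finset.coe_insert, Finset.coe_singleton, Set.image_insert_eq, Set.image_singleton]
  ext x; simp; tauto

lemma sup_triple (o1 o2 o3 : Option F) :
    (cpt o1).submodule ⊔ (cpt o2).submodule ⊔ (cpt o3).submodule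
      = Submodule.span F (vv '' (({o1, o2, o3} : Finset (Option F)) : Set (Option F))) := by
  rw [submodule_cpt, submodule_cpt, submodule_cpt, ← Submodule.span_union,
    ← Submodule.span_union]
  congr 1
  simp only [Finset.coe_insert, Finset.coe_singleton, Set.image_insert_eq, Set.image_singleton]
  ext x; simp; tauto

lemma finrank_chord {o1 o2 : Option F} (h : o1 ≠ o2) :
    Module.finrank F ((cpt o1).submodule ⊔ (cpt o2).submodule : Submodule F (Fin 4 → F)) = 2 := by
  have hcard : ({o1, o2} : Finset (Option F)).card = 2 := by
    rw [Finset.card_insert_of_notMem (by simpa using h), Finset.card_singleton]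
  rw [sup_pair, finrank_span_parms _ (by omega), hcard]

lemma finrank_triangle {o1 o2 o3 : Option F} (h12 : o1 ≠ o2) (h13 : o1 ≠ o3) (h23 : o2 ≠ o3) :
    Module.finrank F ((cpt o1).submodule ⊔ (cpt o2).submodule ⊔ (cpt o3).submodule :
      Submodule F (Fin 4 → F)) = 3 := by
  have hcard : ({o1, o2, o3} : Finset (Option F)).card = 3 := by
    rw [Finset.card_insert_of_notMem (by simp [h12, h13]),
      Finset.card_insert_of_notMem (by simpa using h23), Finset.card_singleton]
  rw [sup_triple, finrank_span_parms _ (by omega), hcard]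

lemma finrank_V : Module.finrank F (Fin 4 → F) = 4 := by
  simp [Module.finrank_pi]

lemma finrank_sup_point (X : Submodule F (Fin 4 → F)) (B : Projectivization F (Fin 4 → F))
    (h : ¬ B.submodule ≤ X) :
    Module.finrank F (X ⊔ B.submodule : Submodule F (Fin 4 → F))
      = Module.finrank F X + 1 := by
  have h1 := Submodule.finrank_sup_add_finrank_inf_eq X B.submodule
  have hinf : X ⊓ B.submodule = ⊥ := by
    by_contra hb
    have hfr : Module.finrank F (X ⊓ B.submodule : Submodule F (Fin 4 → F)) ≠ 0 := by
      intro h0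
      exact hb (Submodule.finrank_eq_zero.mp h0)
    have : X ⊓ B.submodule = B.submodule := by
      apply Submodule.eq_of_le_of_finrank_le inf_le_right
      rw [B.finrank_submodule]
      omega
    exact h (this ▸ inf_le_left)
  rw [hinf, finrank_bot, add_zero, B.finrank_submodule] at h1
  exact h1


lemma card_proj_two [Finite F] (M : Type*) [AddCommGroup M] [Module F M] [FiniteDimensional F M]
    (h2 : Module.finrank F M = 2) : Nat.card (Projectivization F M) = Nat.card F + 1 := by
  let B := (Module.finBasis F M).reindex (finCongr h2)
  have hB1 : ∀ t : F, t • B 0 + B 1 ≠ 0 := by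
    intro t h0
    have h1 : B.repr (t • B 0 + B 1) 1 = 1 := by
      simp [Finsupp.single_apply]
    rw [h0] at h1
    simp at h1
  let φ : Option F → Projectivization F M := fun o =>
    o.elim (Projectivization.mk F (B 0) (B.ne_zero 0))
      (fun t => Projectivization.mk F (t • B 0 + B 1) (hB1 t))
  have hφbij : Function.Bijective φ := by
    constructor
    · intro o1 o2 h
      rcases o1 with _ | t <;> rcases o2 with _ | s
      · rfl
      · exfalso
        obtain ⟨a, ha⟩ := (Projectivization.mk_eq_mk_iff' F _ _ (B.ne_zero 0) (hB1 s)).mp h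
        have h1 : a = 0 := by
          have := congrArg (fun x => B.repr x 1) ha
          simpa [Finsupp.single_apply] using this
        rw [h1, zero_smul] at ha
        exact B.ne_zero 0 ha.symm
      · exfalso
        obtain ⟨a, ha⟩ := (Projectivization.mk_eq_mk_iff' F _ _ (hB1 t) (B.ne_zero 0)).mp h
        have := congrArg (fun x => B.repr x 1) ha
        simp [Finsupp.single_apply] at this
      · obtain ⟨a, ha⟩ := (Projectivization.mk_eq_mk_iff' F _ _ (hB1 t) (hB1 s)).mp h
        have h1 := congrArg (fun x => B.repr x 1) ha
        have h0 := congrArg (fun x => B.repr x 0) ha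
        simp [Finsupp.single_apply] at h1 h0
        rw [h1, one_mul] at h0
        rw [h0]
    · intro x
      induction x using Projectivization.ind with
      | h v hv =>
        set c0 := B.repr v 0 with hc0def
        set c1 := B.repr v 1 with hc1def
        have hrepr : c0 • B 0 + c1 • B 1 = v := by
          rw [hc0def, hc1def, ← Fin.sum_univ_two (f := fun i => B.repr v i • B i)]
          exact B.sum_repr v
        by_cases hc1 : c1 = 0
        · have hc0 : c0 ≠ 0 := by
            intro hc0
            apply hv
            rw [← hrepr, hc0, hc1, zero_smul, zero_smul, add_zero]
          refine ⟨none, ?_⟩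
          show Projectivization.mk F (B 0) (B.ne_zero 0) = Projectivization.mk F v hv
          rw [Projectivization.mk_eq_mk_iff']
          refine ⟨c0⁻¹, ?_⟩
          rw [← hrepr, hc1, zero_smul, add_zero, smul_smul, inv_mul_cancel₀ hc0, one_smul]
        · refine ⟨some (c0 / c1), ?_⟩
          show Projectivization.mk F _ (hB1 (c0 / c1)) = Projectivization.mk F v hv
          rw [Projectivization.mk_eq_mk_iff']
          refine ⟨c1⁻¹, ?_⟩
          rw [← hrepr, smul_add, smul_smul, smul_smul, inv_mul_cancel₀ hc1, one_smul,
            div_eq_inv_mul]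
  calc Nat.card (Projectivization F M) = Nat.card (Option F) :=
        (Nat.card_congr (Equiv.ofBijective φ hφbij)).symm
    _ = Nat.card F + 1 := Finite.card_option

lemma le_comap_mkQ (L : Submodule F (Fin 4 → F)) (U : Submodule F ((Fin 4 → F) ⧸ L)) :
    L ≤ U.comap L.mkQ := by
  intro x hx
  have : L.mkQ x = 0 := by
    rw [Submodule.mkQ_apply, Submodule.Quotient.mk_eq_zero]
    exact hx
  simp [Submodule.mem_comap, this]

set_option synthInstance.maxHeartbeats 1000000 in
lemma finrank_comap_mkQ (L : Submodule F (Fin 4 → F)) (U : Submodule F ((Fin 4 → F) ⧸ L)) :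
    Module.finrank F (U.comap L.mkQ) = Module.finrank F U + Module.finrank F L := by
  set W := U.comap L.mkQ with hW
  have hLW : L ≤ W := le_comap_mkQ L U
  let f : W →ₗ[F] U := L.mkQ.restrict (fun x hx => hx)
  have hsurj : Function.Surjective f := by
    rintro ⟨u, hu⟩
    obtain ⟨x, hx⟩ := L.mkQ_surjective u
    refine ⟨⟨x, ?_⟩, ?_⟩
    · show L.mkQ x ∈ U
      rw [hx]; exact hu
    · exact Subtype.ext hx
  have hrange : LinearMap.range f = ⊤ := LinearMap.range_eq_top.mpr hsurj
  have hker : LinearMap.ker f = (LinearMap.ker L.mkQ).comap W.subtype := by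
    ext x
    simp [f, LinearMap.mem_ker, LinearMap.restrict_apply]
  have h1 := LinearMap.finrank_range_add_finrank_ker f
  rw [hrange, finrank_top, hker, Submodule.ker_mkQ] at h1
  have h2 : Module.finrank F ((L.comap W.subtype)) = Module.finrank F L :=
    (Submodule.comapSubtypeEquivOfLe hLW).finrank_eq
  rw [h2] at h1
  exact h1.symm

lemma card_planes_through [Finite F] (q : ℕ) (hq : Nat.card F = q) (L : Submodule F (Fin 4 → F))
    (hL : Module.finrank F L = 2) :
    Nat.card {W : Submodule F (Fin 4 → F) // Module.finrank F W = 3 ∧ L ≤ W} = q + 1 := by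
  have hV : Module.finrank F (Fin 4 → F) = 4 := finrank_V
  have hquot : Module.finrank F ((Fin 4 → F) ⧸ L) = 2 := by
    have := Submodule.finrank_quotient_add_finrank L
    omega
  let e : {U : Submodule F ((Fin 4 → F) ⧸ L) // Module.finrank F U = 1} ≃
      {W : Submodule F (Fin 4 → F) // Module.finrank F W = 3 ∧ L ≤ W} :=
    { toFun := fun U => ⟨U.1.comap L.mkQ, by
        rw [finrank_comap_mkQ, U.2, hL], le_comap_mkQ L U.1⟩
      invFun := fun W => ⟨W.1.map L.mkQ, by
        have hcm : (W.1.map L.mkQ).comap L.mkQ = W.1 := by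
          rw [Submodule.comap_map_mkQ, sup_eq_right.mpr W.2.2]
        have := finrank_comap_mkQ L (W.1.map L.mkQ)
        rw [hcm, W.2.1, hL] at this
        omega⟩
      left_inv := fun U => by
        ext1
        exact Submodule.map_comap_eq_self (by rw [Submodule.range_mkQ]; exact le_top)
      right_inv := fun W => by
        ext1
        show (W.1.map L.mkQ).comap L.mkQ = W.1
        rw [Submodule.comap_map_mkQ, sup_eq_right.mpr W.2.2] }
  calc Nat.card {W : Submodule F (Fin 4 → F) // Module.finrank F W = 3 ∧ L ≤ W}
      = Nat.card {U : Submodule F ((Fin 4 → F) ⧸ L) // Module.finrank F U = 1} :=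
        (Nat.card_congr e).symm
    _ = Nat.card (Projectivization F ((Fin 4 → F) ⧸ L)) :=
        Nat.card_congr (Projectivization.equivSubmodule F ((Fin 4 → F) ⧸ L)).symm
    _ = Nat.card F + 1 := card_proj_two _ hquot
    _ = q + 1 := by rw [hq]


lemma mem_tc_iff (x : Projectivization F (Fin 4 → F)) :
    x ∈ twistedCubic F ↔ ∃ o : Option F, cpt o = x := by
  rw [twistedCubic_eq_range]; rfl

lemma chord_helper (A : Projectivization F (Fin 4 → F)) (hA : A ∉ twistedCubic F)
    {x y z : Option F} (hxy : x ≠ y) (hxz : x ≠ z) (hyz : y ≠ z)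
    (h1 : A.submodule ≤ (cpt x).submodule ⊔ (cpt y).submodule)
    (h2 : A.submodule ≤ (cpt x).submodule ⊔ (cpt z).submodule) : False := by
  set X := (cpt x).submodule
  set Y := (cpt y).submodule
  set Z := (cpt z).submodule
  have hsupeq : (X ⊔ Y) ⊔ (X ⊔ Z) = X ⊔ Y ⊔ Z := by
    rw [sup_sup_sup_comm, sup_idem, ← sup_assoc]
  have hsup3 : Module.finrank F ((X ⊔ Y) ⊔ (X ⊔ Z) : Submodule F (Fin 4 → F)) = 3 := by
    rw [hsupeq]
    exact finrank_triangle hxy hxz hyz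
  have hrk := Submodule.finrank_sup_add_finrank_inf_eq (X ⊔ Y) (X ⊔ Z)
  rw [hsup3, finrank_chord hxy, finrank_chord hxz] at hrk
  have hXle : X ≤ (X ⊔ Y) ⊓ (X ⊔ Z) := le_inf le_sup_left le_sup_left
  have hXeq : X = (X ⊔ Y) ⊓ (X ⊔ Z) := by
    apply Submodule.eq_of_le_of_finrank_le hXle
    have : Module.finrank F X = 1 := (cpt x).finrank_submodule
    omega
  have hAle : A.submodule ≤ X := hXeq ▸ le_inf h1 h2
  have hAeq : A.submodule = X := by
    apply Submodule.eq_of_le_of_finrank_le hAle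
    rw [(cpt x).finrank_submodule, A.finrank_submodule]
  have : A = cpt x := Projectivization.submodule_injective hAeq
  exact hA ((mem_tc_iff A).mpr ⟨x, this.symm⟩)

lemma chords_disjoint (A : Projectivization F (Fin 4 → F))
    {a b c d : Option F} (hab : a ≠ b) (hcd : c ≠ d)
    (hac : a ≠ c) (had : a ≠ d) (hbc : b ≠ c) (hbd : b ≠ d)
    (h1 : A.submodule ≤ (cpt a).submodule ⊔ (cpt b).submodule)
    (h2 : A.submodule ≤ (cpt c).submodule ⊔ (cpt d).submodule) : False := by
  have hcard : ({a, b, c, d} : Finset (Option F)).card = 4 := by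
    rw [Finset.card_insert_of_notMem (by simp [hab, hac, had]),
      Finset.card_insert_of_notMem (by simp [hbc, hbd]),
      Finset.card_insert_of_notMem (by simpa using hcd), Finset.card_singleton]
  have hsup : ((cpt a).submodule ⊔ (cpt b).submodule) ⊔ ((cpt c).submodule ⊔ (cpt d).submodule)
      = Submodule.span F (vv '' (({a, b, c, d} : Finset (Option F)) : Set (Option F))) := by
    rw [sup_pair, sup_pair, ← Submodule.span_union, ← Set.image_union]
    congr 1
    ext o; simp; tauto
  have hrk := Submodule.finrank_sup_add_finrank_inf_eq
    ((cpt a).submodule ⊔ (cpt b).submodule) ((cpt c).submodule ⊔ (cpt d).submodule)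
  rw [hsup, finrank_span_parms _ (le_of_eq hcard), hcard, finrank_chord hab,
    finrank_chord hcd] at hrk
  have hinf : ((cpt a).submodule ⊔ (cpt b).submodule) ⊓
      ((cpt c).submodule ⊔ (cpt d).submodule) = ⊥ :=
    Submodule.finrank_eq_zero.mp (by omega)
  have : A.submodule = ⊥ := le_bot_iff.mp (hinf ▸ le_inf h1 h2)
  have h1' := A.finrank_submodule
  rw [this, finrank_bot] at h1'
  exact one_ne_zero h1'.symm

lemma chord_unique (A : Projectivization F (Fin 4 → F)) (hA : A ∉ twistedCubic F)
    {a b c d : Option F} (hab : a ≠ b) (hcd : c ≠ d)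
    (h1 : A.submodule ≤ (cpt a).submodule ⊔ (cpt b).submodule)
    (h2 : A.submodule ≤ (cpt c).submodule ⊔ (cpt d).submodule) :
    (a = c ∧ b = d) ∨ (a = d ∧ b = c) := by
  by_contra hcon
  push_neg at hcon
  obtain ⟨hc1, hc2⟩ := hcon
  rcases eq_or_ne a c with rfl | hac
  · exact chord_helper A hA hab hcd (hc1 rfl) h1 h2
  rcases eq_or_ne a d with rfl | had
  · exact chord_helper A hA hab hac (hc2 rfl) h1 (by rwa [sup_comm] at h2)
  rcases eq_or_ne b c with rfl | hbc
  · exact chord_helper A hA hab.symm hcd had (by rwa [sup_comm] at h1) h2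
  rcases eq_or_ne b d with rfl | hbd
  · exact chord_helper A hA hab.symm hbc hac (by rwa [sup_comm] at h1) (by rwa [sup_comm] at h2)
  · exact chords_disjoint A hab hcd hac had hbc hbd h1 h2

lemma ncard_le_three [Finite F] (W : Submodule F (Fin 4 → F))
    (hW : Module.finrank F W = 3) :
    (twistedCubic F ∩ planePts F W).ncard ≤ 3 := by
  classical
  have hO : twistedCubic F ∩ planePts F W
      = cpt '' {o : Option F | (cpt o).submodule ≤ W} := by
    rw [twistedCubic_eq_range]
    ext x
    constructor
    · rintro ⟨⟨o, rfl⟩, hx⟩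
      exact ⟨o, hx, rfl⟩
    · rintro ⟨o, ho, rfl⟩
      exact ⟨⟨o, rfl⟩, ho⟩
  rw [hO, Set.ncard_image_of_injective _ cpt_injective]
  by_contra hcon
  push_neg at hcon
  set O := {o : Option F | (cpt o).submodule ≤ W} with hOdef
  haveI : Fintype F := Fintype.ofFinite F
  have hOfin : O.Finite := Set.toFinite _
  rw [Set.ncard_eq_toFinset_card _ hOfin] at hcon
  obtain ⟨s4, hs4sub, hs4card⟩ := Finset.exists_subset_card_eq (show 4 ≤ _ from hcon)
  have hle : Submodule.span F (vv '' (s4 : Set (Option F))) ≤ W := by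
    rw [Submodule.span_le]
    rintro x ⟨o, ho, rfl⟩
    have hoO : o ∈ O := hOfin.mem_toFinset.mp (hs4sub ho)
    exact (mem_span_iff_le o W).mp hoO
  have h4 : Module.finrank F (Submodule.span F (vv '' (s4 : Set (Option F)))) = 4 := by
    rw [finrank_span_parms _ (le_of_eq hs4card), hs4card]
  have hmono := Submodule.finrank_mono hle
  omega

end TCaux

open TCaux

/-- For a point `A` of `PG(3,q)` off the twisted cubic `C`, with `n_d(A)` the number of
planes through `A` meeting `C` in exactly `d` points: if `A` lies on no real chord of `C`
then `n₂(A) + 3·n₃(A) = q(q+1)/2`, while if `A` lies on a real chord then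
`n₂(A) + 3·n₃(A) = (q²+3q)/2`. -/
theorem stmt7 (q : ℕ) [Fintype F] (hq : Fintype.card F = q)
    (A : Projectivization F (Fin 4 → F)) (hA : A ∉ twistedCubic F) :
    ((¬ ∃ P Q : Projectivization F (Fin 4 → F), P ∈ twistedCubic F ∧ Q ∈ twistedCubic F ∧
        P ≠ Q ∧ A.submodule ≤ P.submodule ⊔ Q.submodule) →
      Nat.card {W : Submodule F (Fin 4 → F) // Module.finrank F W = 3 ∧ A.submodule ≤ W ∧
          (twistedCubic F ∩ planePts F W).ncard = 2} +
        3 * Nat.card {W : Submodule F (Fin 4 → F) // Module.finrank F W = 3 ∧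
          A.submodule ≤ W ∧ (twistedCubic F ∩ planePts F W).ncard = 3} = q * (q + 1) / 2) ∧
    ((∃ P Q : Projectivization F (Fin 4 → F), P ∈ twistedCubic F ∧ Q ∈ twistedCubic F ∧
        P ≠ Q ∧ A.submodule ≤ P.submodule ⊔ Q.submodule) →
      Nat.card {W : Submodule F (Fin 4 → F) // Module.finrank F W = 3 ∧ A.submodule ≤ W ∧
          (twistedCubic F ∩ planePts F W).ncard = 2} +
        3 * Nat.card {W : Submodule F (Fin 4 → F) // Module.finrank F W = 3 ∧
          A.submodule ≤ W ∧ (twistedCubic F ∩ planePts F W).ncard = 3}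
        = (q ^ 2 + 3 * q) / 2) := by
  classical
  haveI : Finite (Projectivization F (Fin 4 → F)) := Quotient.finite _
  haveI : Finite (Submodule F (Fin 4 → F)) :=
    Finite.of_injective _ (SetLike.coe_injective (A := Submodule F (Fin 4 → F)))
  haveI : Fintype (Projectivization F (Fin 4 → F)) := Fintype.ofFinite _
  haveI : Fintype (Submodule F (Fin 4 → F)) := Fintype.ofFinite _
  set d : Submodule F (Fin 4 → F) → ℕ :=
    fun W => (twistedCubic F ∩ planePts F W).ncard with hd
  set Pls : Finset (Submodule F (Fin 4 → F)) :=
    Finset.univ.filter (fun W => Module.finrank F W = 3 ∧ A.submodule ≤ W) with hPls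
  set CF : Finset (Projectivization F (Fin 4 → F)) :=
    Finset.univ.filter (· ∈ twistedCubic F) with hCF
  set T : Finset (Submodule F (Fin 4 → F) ×
      (Projectivization F (Fin 4 → F) × Projectivization F (Fin 4 → F))) :=
    Finset.univ.filter (fun x => (Module.finrank F x.1 = 3 ∧ A.submodule ≤ x.1) ∧
      (x.2.1 ∈ twistedCubic F ∧ x.2.2 ∈ twistedCubic F ∧ x.2.1 ≠ x.2.2) ∧
      x.2.1.submodule ≤ x.1 ∧ x.2.2.submodule ≤ x.1) with hT
  set N2 : ℕ := (Pls.filter (fun W => d W = 2)).card with hN2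
  set N3 : ℕ := (Pls.filter (fun W => d W = 3)).card with hN3
  -- conversion of theorem Nat.card to filter cards
  have hn : ∀ k : ℕ, Nat.card {W : Submodule F (Fin 4 → F) // Module.finrank F W = 3 ∧
      A.submodule ≤ W ∧ (twistedCubic F ∩ planePts F W).ncard = k}
      = (Pls.filter (fun W => d W = k)).card := by
    intro k
    rw [Nat.card_eq_fintype_card, Fintype.card_subtype]
    congr 1
    ext W
    simp only [Finset.mem_filter, Finset.mem_univ, true_and, hPls, hd]
    tauto
  -- d ≤ 3
  have hd3 : ∀ W ∈ Pls, d W ≤ 3 := by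
    intro W hW
    rw [hPls, Finset.mem_filter] at hW
    exact ncard_le_three W hW.2.1
  -- the finset of cubic points on a plane
  have hdcard : ∀ W : Submodule F (Fin 4 → F),
      (Finset.univ.filter (fun P : Projectivization F (Fin 4 → F) =>
        P ∈ twistedCubic F ∧ P.submodule ≤ W)).card = d W := by
    intro W
    show _ = (twistedCubic F ∩ planePts F W).ncard
    rw [Set.ncard_eq_toFinset_card' (twistedCubic F ∩ planePts F W)]
    congr 1
    ext P
    simp [planePts, Set.mem_toFinset]
    exact (Set.mem_toFinset (s := twistedCubic F ∩ {x | x.submodule ≤ W})).symm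
  -- Step A : count T by planes
  have stepA : T.card = 2 * N2 + 6 * N3 := by
    have h1 : T.card = ∑ W ∈ Pls, (T.filter (fun x => x.1 = W)).card := by
      apply Finset.card_eq_sum_card_fiberwise
      intro x hx
      rw [hT, Finset.mem_coe, Finset.mem_filter] at hx
      rw [Finset.mem_coe, hPls, Finset.mem_filter]
      exact ⟨Finset.mem_univ _, hx.2.1⟩
    have h2 : ∀ W ∈ Pls, (T.filter (fun x => x.1 = W)).card = d W * d W - d W := by
      intro W hW
      have hWm := hW
      rw [hPls, Finset.mem_filter] at hWm
      have hbij : (T.filter (fun x => x.1 = W)).card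
          = ((Finset.univ.filter (fun P : Projectivization F (Fin 4 → F) =>
              P ∈ twistedCubic F ∧ P.submodule ≤ W)).offDiag).card := by
        apply Finset.card_nbij' (i := fun x => x.2) (j := fun p => (W, p))
        · intro x hx
          rw [Finset.mem_coe, Finset.mem_filter, hT, Finset.mem_filter] at hx
          obtain ⟨⟨-, -, ⟨hP, hQ, hne⟩, hPle, hQle⟩, hfst⟩ := hx
          rw [Finset.mem_coe, Finset.mem_offDiag]
          subst hfst
          exact ⟨by simp [hP, hPle], by simp [hQ, hQle], hne⟩
        · intro p hp
          rw [Finset.mem_coe, Finset.mem_offDiag] at hp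
          obtain ⟨hp1, hp2, hne⟩ := hp
          simp only [Finset.mem_filter, Finset.mem_univ, true_and] at hp1 hp2
          rw [Finset.mem_coe, Finset.mem_filter, hT, Finset.mem_filter]
          exact ⟨⟨Finset.mem_univ _, hWm.2, ⟨hp1.1, hp2.1, hne⟩, hp1.2, hp2.2⟩, rfl⟩
        · intro x hx
          rw [Finset.mem_coe, Finset.mem_filter] at hx
          rw [← hx.2]
        · intro p _
          rfl
      rw [hbij, Finset.offDiag_card, hdcard]
    rw [h1, Finset.sum_congr rfl h2]
    have h3 : ∀ W ∈ Pls, d W * d W - d W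
        = (if d W = 2 then 2 else 0) + (if d W = 3 then 6 else 0) := by
      intro W hW
      have := hd3 W hW
      interval_cases h : d W <;> simp
    rw [Finset.sum_congr rfl h3, Finset.sum_add_distrib, ← Finset.sum_filter,
      ← Finset.sum_filter, Finset.sum_const, Finset.sum_const, smul_eq_mul, smul_eq_mul,
      ← hN2, ← hN3]
    ring
  -- Step B : count T by pairs
  have stepB : T.card = ∑ p ∈ CF.offDiag,
      (Finset.univ.filter (fun W : Submodule F (Fin 4 → F) =>
        (Module.finrank F W = 3 ∧ A.submodule ≤ W) ∧
        p.1.submodule ≤ W ∧ p.2.submodule ≤ W)).card := by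
    have h1 : T.card = ∑ p ∈ CF.offDiag, (T.filter (fun x => x.2 = p)).card := by
      apply Finset.card_eq_sum_card_fiberwise
      intro x hx
      rw [hT, Finset.mem_coe, Finset.mem_filter] at hx
      rw [Finset.mem_coe, Finset.mem_offDiag]
      refine ⟨?_, ?_, hx.2.2.1.2.2⟩ <;>
        simp [hCF, hx.2.2.1.1, hx.2.2.1.2.1]
    rw [h1]
    refine Finset.sum_congr rfl fun p hp => ?_
    rw [Finset.mem_offDiag] at hp
    obtain ⟨hp1, hp2, hne⟩ := hp
    rw [hCF, Finset.mem_filter] at hp1 hp2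
    apply Finset.card_nbij' (i := fun x => x.1) (j := fun W => (W, p))
    · intro x hx
      rw [Finset.mem_coe, Finset.mem_filter, hT, Finset.mem_filter] at hx
      obtain ⟨⟨-, hWc, -, hPle, hQle⟩, hsnd⟩ := hx
      rw [Finset.mem_coe, Finset.mem_filter]
      subst hsnd
      exact ⟨Finset.mem_univ _, hWc, hPle, hQle⟩
    · intro W hW
      rw [Finset.mem_coe, Finset.mem_filter] at hW
      rw [Finset.mem_coe, Finset.mem_filter, hT, Finset.mem_filter]
      exact ⟨⟨Finset.mem_univ _, hW.2.1, ⟨hp1.2, hp2.2, hne⟩, hW.2.2⟩, rfl⟩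
    · intro x hx
      rw [Finset.mem_coe, Finset.mem_filter] at hx
      rw [← hx.2]
    · intro W _
      rfl
  -- generic pair fiber
  have hgen : ∀ P Q : Projectivization F (Fin 4 → F), P ∈ twistedCubic F → Q ∈ twistedCubic F →
      P ≠ Q → ¬ (A.submodule ≤ P.submodule ⊔ Q.submodule) →
      (Finset.univ.filter (fun W : Submodule F (Fin 4 → F) =>
        (Module.finrank F W = 3 ∧ A.submodule ≤ W) ∧
        P.submodule ≤ W ∧ Q.submodule ≤ W)).card = 1 := by
    intro P Q hP hQ hne hnle
    obtain ⟨oP, rfl⟩ := (mem_tc_iff P).mp hP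
    obtain ⟨oQ, rfl⟩ := (mem_tc_iff Q).mp hQ
    have hoo : oP ≠ oQ := fun h => hne (by rw [h])
    have hch : Module.finrank F
        ((cpt oP).submodule ⊔ (cpt oQ).submodule : Submodule F (Fin 4 → F)) = 2 :=
      finrank_chord hoo
    set U0 : Submodule F (Fin 4 → F) :=
      (cpt oP).submodule ⊔ (cpt oQ).submodule ⊔ A.submodule with hU0
    have hU0rank : Module.finrank F U0 = 3 := by
      rw [hU0, finrank_sup_point _ _ hnle, hch]
    rw [Finset.card_eq_one]
    refine ⟨U0, ?_⟩
    ext W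
    rw [Finset.mem_filter, Finset.mem_singleton]
    constructor
    · rintro ⟨-, ⟨hW3, hAW⟩, hPW, hQW⟩
      have hle : U0 ≤ W := by
        rw [hU0]
        exact sup_le (sup_le hPW hQW) hAW
      exact (Submodule.eq_of_le_of_finrank_le hle (by omega)).symm
    · rintro rfl
      refine ⟨Finset.mem_univ _, ⟨hU0rank, ?_⟩, ?_, ?_⟩
      · exact le_sup_right
      · exact le_trans le_sup_left le_sup_left
      · exact le_trans le_sup_right le_sup_left
  -- chord pair fiber
  have hchordfib : ∀ P Q : Projectivization F (Fin 4 → F), P ∈ twistedCubic F →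
      Q ∈ twistedCubic F → P ≠ Q → A.submodule ≤ P.submodule ⊔ Q.submodule →
      (Finset.univ.filter (fun W : Submodule F (Fin 4 → F) =>
        (Module.finrank F W = 3 ∧ A.submodule ≤ W) ∧
        P.submodule ≤ W ∧ Q.submodule ≤ W)).card = q + 1 := by
    intro P Q hP hQ hne hle
    obtain ⟨oP, rfl⟩ := (mem_tc_iff P).mp hP
    obtain ⟨oQ, rfl⟩ := (mem_tc_iff Q).mp hQ
    have hoo : oP ≠ oQ := fun h => hne (by rw [h])
    have hch := finrank_chord (F := F) hoo
    have hcount := card_planes_through (F := F) q (by rw [Nat.card_eq_fintype_card, hq])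
      ((cpt oP).submodule ⊔ (cpt oQ).submodule) hch
    rw [← hcount, Nat.card_eq_fintype_card, Fintype.card_subtype]
    congr 1
    ext W
    simp only [Finset.mem_filter, Finset.mem_univ, true_and, sup_le_iff]
    constructor
    · rintro ⟨⟨h3, -⟩, hPW, hQW⟩
      exact ⟨h3, hPW, hQW⟩
    · rintro ⟨h3, hPW, hQW⟩
      exact ⟨⟨h3, le_trans hle (sup_le hPW hQW)⟩, hPW, hQW⟩
  -- cardinality of CF
  have hCFcard : CF.card = q + 1 := by
    have h1 : CF.card = Fintype.card {x // x ∈ twistedCubic F} :=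
      (Fintype.card_subtype _).symm
    rw [h1, ← Nat.card_eq_fintype_card]
    have h2 : Nat.card (twistedCubic F) = Nat.card (Set.range (cpt (F := F))) := by
      rw [twistedCubic_eq_range]
    rw [h2, Nat.card_range_of_injective cpt_injective, Finite.card_option,
      Nat.card_eq_fintype_card, hq]
  constructor
  · -- no chord case
    intro hno
    rw [hn 2, hn 3, ← hN2, ← hN3]
    have hfib1 : ∀ p ∈ CF.offDiag,
        (Finset.univ.filter (fun W : Submodule F (Fin 4 → F) =>
          (Module.finrank F W = 3 ∧ A.submodule ≤ W) ∧
          p.1.submodule ≤ W ∧ p.2.submodule ≤ W)).card = 1 := by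
      intro p hp
      rw [Finset.mem_offDiag] at hp
      obtain ⟨hp1, hp2, hne⟩ := hp
      rw [hCF, Finset.mem_filter] at hp1 hp2
      exact hgen p.1 p.2 hp1.2 hp2.2 hne
        (fun h => hno ⟨p.1, p.2, hp1.2, hp2.2, hne, h⟩)
    have htot : T.card = CF.offDiag.card := by
      rw [stepB, Finset.sum_congr rfl hfib1, Finset.sum_const, smul_eq_mul, mul_one]
    rw [stepA] at htot
    rw [Finset.offDiag_card, hCFcard] at htot
    have hexp : (q + 1) * (q + 1) - (q + 1) = q * (q + 1) := by
      have : (q + 1) * (q + 1) = q * (q + 1) + (q + 1) := by ring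
      omega
    rw [hexp] at htot
    set m := q * (q + 1) with hm
    omega
  · -- chord case
    rintro ⟨P0, Q0, hP0, hQ0, hne0, hch0⟩
    rw [hn 2, hn 3, ← hN2, ← hN3]
    obtain ⟨a, rfl⟩ := (mem_tc_iff P0).mp hP0
    obtain ⟨b, rfl⟩ := (mem_tc_iff Q0).mp hQ0
    have hab : a ≠ b := fun h => hne0 (by rw [h])
    set pairset : Finset (Projectivization F (Fin 4 → F) × Projectivization F (Fin 4 → F)) :=
      {(cpt a, cpt b), (cpt b, cpt a)} with hpairset
    have hP0CF : cpt a ∈ CF := by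
      rw [hCF, Finset.mem_filter]
      exact ⟨Finset.mem_univ _, hP0⟩
    have hQ0CF : cpt b ∈ CF := by
      rw [hCF, Finset.mem_filter]
      exact ⟨Finset.mem_univ _, hQ0⟩
    have hsub : pairset ⊆ CF.offDiag := by
      intro p hp
      rw [hpairset, Finset.mem_insert, Finset.mem_singleton] at hp
      rw [Finset.mem_offDiag]
      rcases hp with rfl | rfl
      · exact ⟨hP0CF, hQ0CF, hne0⟩
      · exact ⟨hQ0CF, hP0CF, hne0.symm⟩
    have hpaircard : pairset.card = 2 := by
      rw [hpairset, Finset.card_insert_of_notMem, Finset.card_singleton]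
      rw [Finset.mem_singleton]
      intro h
      rw [Prod.ext_iff] at h
      exact hne0 h.1
    have hfib : ∀ p ∈ CF.offDiag,
        (Finset.univ.filter (fun W : Submodule F (Fin 4 → F) =>
          (Module.finrank F W = 3 ∧ A.submodule ≤ W) ∧
          p.1.submodule ≤ W ∧ p.2.submodule ≤ W)).card
          = if p ∈ pairset then q + 1 else 1 := by
      intro p hp
      rw [Finset.mem_offDiag] at hp
      obtain ⟨hp1, hp2, hne⟩ := hp
      rw [hCF, Finset.mem_filter] at hp1 hp2
      by_cases hmem : p ∈ pairset
      · rw [if_pos hmem]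
        rw [hpairset, Finset.mem_insert, Finset.mem_singleton] at hmem
        rcases hmem with h | h
        · rw [h]
          exact hchordfib _ _ hP0 hQ0 hne0 hch0
        · rw [h]
          exact hchordfib _ _ hQ0 hP0 hne0.symm (by rwa [sup_comm] at hch0)
      · rw [if_neg hmem]
        apply hgen p.1 p.2 hp1.2 hp2.2 hne
        intro hle
        obtain ⟨c, hc⟩ := (mem_tc_iff p.1).mp hp1.2
        obtain ⟨e, he⟩ := (mem_tc_iff p.2).mp hp2.2
        rw [← hc, ← he] at hle hne
        have hce : c ≠ e := fun h => hne (by rw [h])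
        rcases chord_unique A hA hab hce hch0 hle with ⟨h1, h2⟩ | ⟨h1, h2⟩
        · apply hmem
          rw [hpairset, Finset.mem_insert]
          left
          rw [h1, h2, hc, he]
        · apply hmem
          rw [hpairset, Finset.mem_insert, Finset.mem_singleton]
          right
          rw [h1, h2, hc, he]
    have htot : T.card = CF.offDiag.card + 2 * q := by
      rw [stepB, Finset.sum_congr rfl hfib]
      have hsplit : ∀ p ∈ CF.offDiag,
          (if p ∈ pairset then q + 1 else 1) = 1 + (if p ∈ pairset then q else 0) := by
        intro p _
        split_ifs <;> omega
      rw [Finset.sum_congr rfl hsplit, Finset.sum_add_distrib, Finset.sum_const,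
        Finset.sum_ite_mem, Finset.inter_eq_right.mpr hsub, Finset.sum_const,
        hpaircard, smul_eq_mul, smul_eq_mul, mul_one]
    rw [stepA] at htot
    rw [Finset.offDiag_card, hCFcard] at htot
    have hexp : (q + 1) * (q + 1) - (q + 1) + 2 * q = q ^ 2 + 3 * q := by
      have h1 : (q + 1) * (q + 1) = q * q + 2 * q + 1 := by ring
      have h2 : q ^ 2 = q * q := sq q
      omega
    rw [hexp] at htot
    set m := q ^ 2 + 3 * q with hm
    omega
end
end

section
/- Let q ≡ 1 (mod 3) and let T be the multiset of all products t1·t2·t3 of three pairwise distinct elements of F_q^* (of total size C(q-1,3)). Then the number of elements of T that are nonzero cubes in F_q equals ((q-1)/3)·((q^2-5q+10)/6), and the number that are non-cubes equals (2(q-1)/3)·((q^2-5q+4)/6). -/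
open Finset Polynomial

/-- Generic 6-to-1 counting lemma: the number of 3-element subsets of `S` satisfying a
symmetric-able predicate `Q`, times 6, equals the corresponding count of ordered triples. -/
lemma six_to_one_count {α : Type*} [DecidableEq α] (S : Finset α) (p : α → α → α → Prop)
    [∀ a b c, Decidable (p a b c)] (Q : Finset α → Prop) [DecidablePred Q]
    (hQ : ∀ a b c : α, a ≠ b → a ≠ c → b ≠ c → (Q {a, b, c} ↔ p a b c)) :
    ((S.powersetCard 3).filter Q).card * 6 =
      ∑ a ∈ S, ∑ b ∈ S.erase a, (((S.erase a).erase b).filter (fun c => p a b c)).card := by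
  set O : Finset (Σ _ : α, Σ _ : α, α) :=
    S.sigma (fun a => (S.erase a).sigma
      (fun b => ((S.erase a).erase b).filter (fun c => p a b c))) with hO
  have hOcard : O.card = ∑ a ∈ S, ∑ b ∈ S.erase a,
      (((S.erase a).erase b).filter (fun c => p a b c)).card := by
    rw [hO, Finset.card_sigma]
    exact Finset.sum_congr rfl fun a _ => Finset.card_sigma _ _
  have hmem : ∀ t ∈ O, ({t.1, t.2.1, t.2.2} : Finset α) ∈ (S.powersetCard 3).filter Q := by
    rintro ⟨x, y, z⟩ ht
    simp only [hO, Finset.mem_sigma, Finset.mem_filter, Finset.mem_erase] at ht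
    obtain ⟨hx, ⟨hyx, hy⟩, ⟨⟨hzy, hzx, hz⟩, hp⟩⟩ := ht
    have hxy : x ≠ y := Ne.symm hyx
    have hxz : x ≠ z := Ne.symm hzx
    have hyz : y ≠ z := Ne.symm hzy
    rw [Finset.mem_filter, Finset.mem_powersetCard]
    refine ⟨⟨?_, ?_⟩, ?_⟩
    · intro w hw
      simp only [Finset.mem_insert, Finset.mem_singleton] at hw
      rcases hw with rfl | rfl | rfl <;> assumption
    · exact Finset.card_eq_three.mpr ⟨x, y, z, hxy, hxz, hyz, rfl⟩
    · exact (hQ x y z hxy hxz hyz).mpr hp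
  have hfib : ∀ s ∈ (S.powersetCard 3).filter Q,
      (O.filter (fun t => ({t.1, t.2.1, t.2.2} : Finset α) = s)).card = 6 := by
    intro s hs
    rw [Finset.mem_filter, Finset.mem_powersetCard] at hs
    obtain ⟨⟨hsS, hs3⟩, hQs⟩ := hs
    have hDs : O.filter (fun t => ({t.1, t.2.1, t.2.2} : Finset α) = s)
        = s.sigma (fun x => (s.erase x).sigma (fun y => (s.erase x).erase y)) := by
      ext ⟨x, y, z⟩
      simp only [hO, Finset.mem_filter, Finset.mem_sigma, Finset.mem_erase]
      constructor
      · rintro ⟨⟨hx, ⟨hyx, hy⟩, ⟨hzy, hzx, hz⟩, hp⟩, hset⟩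
        have hmem3 : ∀ w, w ∈ ({x, y, z} : Finset α) → w ∈ s := fun w hw => hset ▸ hw
        exact ⟨hmem3 x (by simp), ⟨hyx, hmem3 y (by simp)⟩, hzy, hzx, hmem3 z (by simp)⟩
      · rintro ⟨hx, ⟨hyx, hy⟩, hzy, hzx, hz⟩
        have hxy : x ≠ y := Ne.symm hyx
        have hxz : x ≠ z := Ne.symm hzx
        have hyz : y ≠ z := Ne.symm hzy
        have hxyz : ({x, y, z} : Finset α) = s := by
          apply Finset.eq_of_subset_of_card_le
          · intro w hw
            simp only [Finset.mem_insert, Finset.mem_singleton] at hw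
            rcases hw with rfl | rfl | rfl <;> assumption
          · rw [hs3, Finset.card_eq_three.mpr ⟨x, y, z, hxy, hxz, hyz, rfl⟩]
        exact ⟨⟨hsS hx, ⟨hyx, hsS hy⟩, ⟨hzy, hzx, hsS hz⟩,
          (hQ x y z hxy hxz hyz).mp (hxyz ▸ hQs)⟩, hxyz⟩
    rw [hDs, Finset.card_sigma]
    have h1 : ∀ x ∈ s, ((s.erase x).sigma (fun y => (s.erase x).erase y)).card = 2 := by
      intro x hx
      rw [Finset.card_sigma]
      have h2 : ∀ y ∈ s.erase x, ((s.erase x).erase y).card = 1 := by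
        intro y hy
        rw [Finset.card_erase_of_mem hy, Finset.card_erase_of_mem hx, hs3]
      rw [Finset.sum_congr rfl h2, Finset.sum_const, Finset.card_erase_of_mem hx, hs3]
      norm_num
    rw [Finset.sum_congr rfl h1, Finset.sum_const, hs3]
    norm_num
  rw [Finset.card_eq_sum_card_fiberwise hmem, Finset.sum_congr rfl hfib,
    Finset.sum_const, smul_eq_mul] at hOcard
  rw [← hOcard]

/-- Let `q ≡ 1 (mod 3)` and consider the multiset of products `t1·t2·t3` over all
3-element subsets of `F_q^*` (of total size `C(q-1,3)`). Then the number of these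
products that are (nonzero) cubes equals `((q-1)/3)·((q²-5q+10)/6)`, and the number
that are non-cubes equals `2((q-1)/3)·((q²-5q+4)/6)`. -/
theorem stmt12 (F : Type*) [Field F] [Fintype F] (q : ℕ) (hq : Fintype.card F = q)
    (hq3 : q % 3 = 1) :
    (Nat.card {s : Finset F // (0 : F) ∉ s ∧ s.card = 3 ∧
        ∃ y : F, y ^ 3 = ∏ x ∈ s, x} : ℤ)
      = ((q : ℤ) - 1) / 3 * (((q : ℤ) ^ 2 - 5 * q + 10) / 6) ∧
    (Nat.card {s : Finset F // (0 : F) ∉ s ∧ s.card = 3 ∧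
        ¬ ∃ y : F, y ^ 3 = ∏ x ∈ s, x} : ℤ)
      = 2 * (((q : ℤ) - 1) / 3) * (((q : ℤ) ^ 2 - 5 * q + 4) / 6) := by
  classical
  have hq2 : 2 ≤ q := hq ▸ Fintype.one_lt_card
  obtain ⟨m, hm⟩ : ∃ m, q = 3 * m + 1 := ⟨q / 3, by omega⟩
  have hm1 : 1 ≤ m := by omega
  obtain ⟨j, hj⟩ : ∃ j, m * (m - 1) = 2 * j := (Nat.even_mul_pred_self m).exists_two_nsmul _
  set S : Finset F := Finset.univ.filter (fun x : F => x ≠ 0) with hSdef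
  have hSmem : ∀ x : F, x ∈ S ↔ x ≠ 0 := by
    intro x; simp [hSdef]
  have hS : S.card = q - 1 := by
    rw [hSdef, Finset.filter_ne', Finset.card_erase_of_mem (Finset.mem_univ 0),
      Finset.card_univ, hq]
  -- The number of cube roots of unity is 3
  have hc : Nat.card Fˣ = q - 1 := by
    rw [Nat.card_eq_fintype_card, Fintype.card_units, hq]
  obtain ⟨g, hg⟩ := IsCyclic.exists_ofOrder_eq_natCard (α := Fˣ)
  rw [hc] at hg
  have hgm : orderOf (g ^ m) = 3 := by
    rw [orderOf_pow, hg, show q - 1 = 3 * m by omega]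
    rw [Nat.gcd_eq_right ⟨3, by ring⟩, Nat.mul_div_cancel _ (by omega)]
  have hprim : IsPrimitiveRoot ((g ^ m : Fˣ) : F) 3 := by
    have h := IsPrimitiveRoot.orderOf (g ^ m)
    rw [hgm] at h
    exact IsPrimitiveRoot.coe_units_iff.mpr h
  have hroots : (Finset.univ.filter (fun y : F => y ^ 3 = 1)).card = 3 := by
    have hset : Finset.univ.filter (fun y : F => y ^ 3 = 1) = nthRootsFinset 3 (1 : F) := by
      ext y
      simp [Polynomial.mem_nthRootsFinset (by norm_num : 0 < 3)]
    rw [hset, hprim.card_nthRootsFinset]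
  -- each nonzero cube has exactly 3 cube roots
  have hfib3 : ∀ x : F, x ≠ 0 → (∃ y : F, y ^ 3 = x) →
      (Finset.univ.filter (fun y : F => y ^ 3 = x)).card = 3 := by
    intro x hx hex
    obtain ⟨y0, hy0⟩ := hex
    have hy0ne : y0 ≠ 0 := by
      rintro rfl; apply hx; rw [← hy0]; norm_num
    refine Eq.trans (Finset.card_nbij' (fun y => y * y0⁻¹) (fun z => z * y0)
      ?_ ?_ ?_ ?_) hroots
    · intro y hy
      simp only [Finset.mem_coe, Finset.mem_filter, Finset.mem_univ, true_and] at hy ⊢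
      rw [mul_pow, hy, inv_pow, hy0, mul_inv_cancel₀ hx]
    · intro z hz
      simp only [Finset.mem_coe, Finset.mem_filter, Finset.mem_univ, true_and] at hz ⊢
      rw [mul_pow, hz, hy0, one_mul]
    · intro y _; exact inv_mul_cancel_right₀ hy0ne y
    · intro z _; exact mul_inv_cancel_right₀ hy0ne z
  -- the number of nonzero cubes is m
  have hCcard : (S.filter (fun x => ∃ y : F, y ^ 3 = x)).card = m := by
    have hmap : ∀ y ∈ S, y ^ 3 ∈ S.filter (fun x => ∃ y : F, y ^ 3 = x) := by
      intro y hy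
      rw [hSmem] at hy
      rw [Finset.mem_filter, hSmem]
      exact ⟨pow_ne_zero 3 hy, y, rfl⟩
    have htot := Finset.card_eq_sum_card_fiberwise hmap
    rw [hS] at htot
    have heach : ∀ x ∈ S.filter (fun x => ∃ y : F, y ^ 3 = x),
        (S.filter (fun y => y ^ 3 = x)).card = 3 := by
      intro x hx
      rw [Finset.mem_filter, hSmem] at hx
      obtain ⟨hx0, hcube⟩ := hx
      have hset : S.filter (fun y => y ^ 3 = x) = Finset.univ.filter (fun y : F => y ^ 3 = x) := by
        apply Finset.ext
        intro y
        simp only [Finset.mem_filter, hSmem, Finset.mem_univ, true_and]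
        constructor
        · rintro ⟨-, h⟩; exact h
        · intro h
          refine ⟨?_, h⟩
          rintro rfl; apply hx0; rw [← h]; norm_num
      rw [hset]
      exact hfib3 x hx0 hcube
    rw [Finset.sum_congr rfl heach, Finset.sum_const, smul_eq_mul] at htot
    omega
  -- coset count
  have hC3 : ∀ u : F, u ≠ 0 → (S.filter (fun b => ∃ y : F, y ^ 3 = u * b)).card = m := by
    intro u hu
    rw [← hCcard]
    refine Finset.card_nbij' (fun b => u * b) (fun x => u⁻¹ * x) ?_ ?_ ?_ ?_
    · intro b hb
      rw [Finset.mem_coe, Finset.mem_filter, hSmem] at hb ⊢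
      exact ⟨mul_ne_zero hu hb.1, hb.2⟩
    · intro x hx
      simp only [Finset.mem_coe, Finset.mem_filter, hSmem] at hx ⊢
      refine ⟨fun h => hx.1 (by rw [← mul_inv_cancel_left₀ hu x, h, mul_zero]), ?_⟩
      rw [mul_inv_cancel_left₀ hu]
      exact hx.2
    · intro b _; exact inv_mul_cancel_left₀ hu b
    · intro x _; exact mul_inv_cancel_left₀ hu x
  have hcube_mul_cube : ∀ (x b : F), b ≠ 0 →
      ((∃ y : F, y ^ 3 = x * b ^ 3) ↔ (∃ y : F, y ^ 3 = x)) := by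
    intro x b hb
    constructor
    · rintro ⟨y, hy⟩
      refine ⟨y * b⁻¹, ?_⟩
      rw [mul_pow, hy, inv_pow, mul_inv_cancel_right₀ (pow_ne_zero 3 hb)]
    · rintro ⟨y, hy⟩
      exact ⟨y * b, by rw [mul_pow, hy]⟩
  have hC4 : ∀ u : F, u ≠ 0 →
      (S.filter (fun b => ∃ y : F, y ^ 3 = u * (b * b))).card = m := by
    intro u hu
    have hstep : (S.filter (fun b => ∃ y : F, y ^ 3 = u * (b * b)))
        = (S.filter (fun b => ∃ y : F, y ^ 3 = u * b⁻¹)) := by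
      apply Finset.filter_congr
      intro b hb
      rw [hSmem] at hb
      have hrw : u * (b * b) = (u * b⁻¹) * b ^ 3 := by
        field_simp
      rw [hrw]
      exact hcube_mul_cube _ b hb
    rw [hstep, ← hC3 u hu]
    refine Finset.card_nbij' (fun b => b⁻¹) (fun b => b⁻¹) ?_ ?_ ?_ ?_
    · intro b hb
      rw [Finset.mem_coe, Finset.mem_filter, hSmem] at hb ⊢
      exact ⟨inv_ne_zero hb.1, hb.2⟩
    · intro b hb
      rw [Finset.mem_coe, Finset.mem_filter, hSmem] at hb ⊢
      refine ⟨inv_ne_zero hb.1, ?_⟩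
      rw [inv_inv]
      exact hb.2
    · intro b _; exact inv_inv b
    · intro b _; exact inv_inv b
  -- main ordered-triple count
  have hQiff : ∀ a b c : F, a ≠ b → a ≠ c → b ≠ c →
      ((∃ y : F, y ^ 3 = ∏ x ∈ ({a, b, c} : Finset F), x) ↔
        (∃ y : F, y ^ 3 = a * b * c)) := by
    intro a b c hab hac hbc
    rw [Finset.prod_insert (by simp [hab, hac]), Finset.prod_insert (by simp [hbc]),
      Finset.prod_singleton, ← mul_assoc]
  have hmain := six_to_one_count S (fun a b c => ∃ y : F, y ^ 3 = a * b * c)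
    (fun s => ∃ y : F, y ^ 3 = ∏ x ∈ s, x) hQiff
  have hinner : ∀ a ∈ S,
      (∑ b ∈ S.erase a,
        (((S.erase a).erase b).filter (fun c => ∃ y : F, y ^ 3 = a * b * c)).card)
        + 2 * (m - 1) = (q - 2) * m := by
    intro a haS
    have ha0 : a ≠ 0 := (hSmem a).mp haS
    have key : ∀ b ∈ S.erase a,
        (((S.erase a).erase b).filter (fun c => ∃ y : F, y ^ 3 = a * b * c)).card
          + ((if (∃ y : F, y ^ 3 = a * b * b) then 1 else 0)
            + (if (∃ y : F, y ^ 3 = a * b * a) then 1 else 0)) = m := by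
      intro b hb
      rw [Finset.mem_erase] at hb
      obtain ⟨hba, hbS⟩ := hb
      have hb0 : b ≠ 0 := (hSmem b).mp hbS
      set X := S.filter (fun c => ∃ y : F, y ^ 3 = a * b * c) with hX
      have hXcard : X.card = m := hC3 (a * b) (mul_ne_zero ha0 hb0)
      have hcomm : ((S.erase a).erase b).filter (fun c => ∃ y : F, y ^ 3 = a * b * c)
          = (X.erase a).erase b := by
        rw [Finset.filter_erase, Finset.filter_erase]
      have e1 : ((X.erase a).erase b).card + (if (∃ y : F, y ^ 3 = a * b * b) then 1 else 0)
          = (X.erase a).card := by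
        by_cases h : ∃ y : F, y ^ 3 = a * b * b
        · rw [if_pos h]
          refine Finset.card_erase_add_one ?_
          rw [Finset.mem_erase, hX, Finset.mem_filter]
          exact ⟨hba, hbS, h⟩
        · rw [if_neg h, add_zero, Finset.erase_eq_of_notMem]
          rw [Finset.mem_erase, hX, Finset.mem_filter]
          rintro ⟨-, -, hcube⟩
          exact h hcube
      have e2 : (X.erase a).card + (if (∃ y : F, y ^ 3 = a * b * a) then 1 else 0)
          = X.card := by
        by_cases h : ∃ y : F, y ^ 3 = a * b * a
        · rw [if_pos h]
          refine Finset.card_erase_add_one ?_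
          rw [hX, Finset.mem_filter]
          exact ⟨haS, h⟩
        · rw [if_neg h, add_zero, Finset.erase_eq_of_notMem]
          rw [hX, Finset.mem_filter]
          rintro ⟨-, hcube⟩
          exact h hcube
      rw [hcomm, ← hXcard, ← e2, ← e1]
      ring
    have hsum1 : (∑ b ∈ S.erase a, (if (∃ y : F, y ^ 3 = a * b * b) then 1 else 0)) = m - 1 := by
      rw [← Finset.card_filter, Finset.filter_erase]
      have hmemA : a ∈ S.filter (fun b => ∃ y : F, y ^ 3 = a * b * b) := by
        rw [Finset.mem_filter]
        exact ⟨haS, ⟨a, by ring⟩⟩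
      rw [Finset.card_erase_of_mem hmemA]
      congr 1
      rw [Finset.filter_congr (fun b _ => by rw [mul_assoc] :
          ∀ b ∈ S, ((∃ y : F, y ^ 3 = a * b * b) ↔ (∃ y : F, y ^ 3 = a * (b * b))))]
      exact hC4 a ha0
    have hsum2 : (∑ b ∈ S.erase a, (if (∃ y : F, y ^ 3 = a * b * a) then 1 else 0)) = m - 1 := by
      rw [← Finset.card_filter, Finset.filter_erase]
      have hmemA : a ∈ S.filter (fun b => ∃ y : F, y ^ 3 = a * b * a) := by
        rw [Finset.mem_filter]
        exact ⟨haS, ⟨a, by ring⟩⟩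
      rw [Finset.card_erase_of_mem hmemA]
      congr 1
      rw [Finset.filter_congr (fun b _ => by rw [mul_right_comm] :
          ∀ b ∈ S, ((∃ y : F, y ^ 3 = a * b * a) ↔ (∃ y : F, y ^ 3 = a * a * b)))]
      exact hC3 (a * a) (mul_ne_zero ha0 ha0)
    have hsplit := Finset.sum_congr rfl key
    rw [Finset.sum_add_distrib, Finset.sum_add_distrib, hsum1, hsum2, Finset.sum_const,
      Finset.card_erase_of_mem haS, hS, smul_eq_mul,
      show q - 1 - 1 = q - 2 from by omega] at hsplit
    rw [← hsplit]
    have h2m : 2 * (m - 1) = (m - 1) + (m - 1) := by ring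
    rw [h2m]
  have hA : ((S.powersetCard 3).filter (fun s => ∃ y : F, y ^ 3 = ∏ x ∈ s, x)).card * 6
      + (q - 1) * (2 * (m - 1)) = (q - 1) * ((q - 2) * m) := by
    have hsum := Finset.sum_congr rfl hinner
    rw [Finset.sum_add_distrib, Finset.sum_const, Finset.sum_const, hS, smul_eq_mul,
      smul_eq_mul] at hsum
    rw [hmain]
    exact hsum
  have hTot : (S.powersetCard 3).card * 6 = (q - 1) * ((q - 2) * (q - 3)) := by
    have h6 := six_to_one_count S (fun _ _ _ => True) (fun _ => True)
      (fun a b c _ _ _ => by simp)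
    rw [Finset.filter_true] at h6
    have hin : ∀ a ∈ S, (∑ b ∈ S.erase a,
        (((S.erase a).erase b).filter (fun _ => True)).card) = (q - 2) * (q - 3) := by
      intro a ha
      have hper : ∀ b ∈ S.erase a, (((S.erase a).erase b).filter (fun _ => True)).card
          = q - 3 := by
        intro b hb
        rw [Finset.filter_true, Finset.card_erase_of_mem hb, Finset.card_erase_of_mem ha, hS]
        omega
      rw [Finset.sum_congr rfl hper, Finset.sum_const, Finset.card_erase_of_mem ha, hS,
        smul_eq_mul]
      congr 1
    rw [h6, Finset.sum_congr rfl hin, Finset.sum_const, hS, smul_eq_mul]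
  have hPQ := Finset.card_filter_add_card_filter_not
    (s := S.powersetCard 3) (p := fun s => ∃ y : F, y ^ 3 = ∏ x ∈ s, x)
  -- arithmetic in ℤ
  have hq'' : (q : ℤ) = 3 * (m : ℤ) + 1 := by exact_mod_cast hm
  have hjz : (m : ℤ) * ((m : ℤ) - 1) = 2 * (j : ℤ) := by
    have := hj
    zify [hm1] at this
    exact this
  have hq4 : 4 ≤ q := by omega
  zify [hm1, show 1 ≤ q from by omega, show 2 ≤ q from by omega,
    show 3 ≤ q from by omega] at hA hTot
  have hPc : (((S.powersetCard 3).filter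
      (fun s => ∃ y : F, y ^ 3 = ∏ x ∈ s, x)).card : ℤ) = (m : ℤ) * (3 * j + 1) := by
    have h6 : (((S.powersetCard 3).filter
        (fun s => ∃ y : F, y ^ 3 = ∏ x ∈ s, x)).card : ℤ) * 6
        = ((m : ℤ) * (3 * j + 1)) * 6 := by
      rw [hq''] at hA
      linear_combination hA + (9 * (m : ℤ)) * hjz
    exact mul_right_cancel₀ (by norm_num) h6
  have hTotc : ((S.powersetCard 3).card : ℤ) = (m : ℤ) * (9 * j + 1) := by
    have h6 : ((S.powersetCard 3).card : ℤ) * 6 = ((m : ℤ) * (9 * j + 1)) * 6 := by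
      rw [hq''] at hTot
      linear_combination hTot + (27 * (m : ℤ)) * hjz
    exact mul_right_cancel₀ (by norm_num) h6
  have hPQz : (((S.powersetCard 3).filter
        (fun s => ∃ y : F, y ^ 3 = ∏ x ∈ s, x)).card : ℤ)
      + (((S.powersetCard 3).filter
        (fun s => ¬ ∃ y : F, y ^ 3 = ∏ x ∈ s, x)).card : ℤ)
      = ((S.powersetCard 3).card : ℤ) := by exact_mod_cast hPQ
  have hP'c : (((S.powersetCard 3).filter
      (fun s => ¬ ∃ y : F, y ^ 3 = ∏ x ∈ s, x)).card : ℤ) = 6 * (m : ℤ) * j := by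
    linear_combination hPQz - hPc + hTotc
  -- Nat.card conversions
  have hsubP : ∀ (P : F → Prop), (∀ s : Finset F, True) →
      True := fun _ _ => trivial
  have hPcard : Nat.card {s : Finset F // (0 : F) ∉ s ∧ s.card = 3 ∧
      ∃ y : F, y ^ 3 = ∏ x ∈ s, x}
      = ((S.powersetCard 3).filter (fun s => ∃ y : F, y ^ 3 = ∏ x ∈ s, x)).card := by
    rw [Nat.card_eq_fintype_card, Fintype.card_subtype]
    congr 1
    apply Finset.ext
    intro s
    simp only [Finset.mem_filter, Finset.mem_powersetCard, Finset.mem_univ, true_and]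
    constructor
    · rintro ⟨h0, h3, hc⟩
      refine ⟨⟨?_, h3⟩, hc⟩
      intro x hx
      rw [hSmem]
      rintro rfl
      exact h0 hx
    · rintro ⟨⟨hsub, h3⟩, hc⟩
      refine ⟨?_, h3, hc⟩
      intro h0
      exact ((hSmem 0).mp (hsub h0)) rfl
  have hP'card : Nat.card {s : Finset F // (0 : F) ∉ s ∧ s.card = 3 ∧
      ¬ ∃ y : F, y ^ 3 = ∏ x ∈ s, x}
      = ((S.powersetCard 3).filter (fun s => ¬ ∃ y : F, y ^ 3 = ∏ x ∈ s, x)).card := by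
    rw [Nat.card_eq_fintype_card, Fintype.card_subtype]
    congr 1
    apply Finset.ext
    intro s
    simp only [Finset.mem_filter, Finset.mem_powersetCard, Finset.mem_univ, true_and]
    constructor
    · rintro ⟨h0, h3, hc⟩
      refine ⟨⟨?_, h3⟩, hc⟩
      intro x hx
      rw [hSmem]
      rintro rfl
      exact h0 hx
    · rintro ⟨⟨hsub, h3⟩, hc⟩
      refine ⟨?_, h3, hc⟩
      intro h0
      exact ((hSmem 0).mp (hsub h0)) rfl
  have e1 : ((q : ℤ) - 1) / 3 = (m : ℤ) := by
    rw [hq'', show (3 * (m : ℤ) + 1 - 1) = 3 * (m : ℤ) from by ring]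
    exact Int.mul_ediv_cancel_left _ (by norm_num)
  have e2 : ((q : ℤ) ^ 2 - 5 * q + 10) / 6 = 3 * (j : ℤ) + 1 := by
    rw [show ((q : ℤ) ^ 2 - 5 * q + 10) = 6 * (3 * (j : ℤ) + 1) from by
      rw [hq'']; linear_combination 9 * hjz]
    exact Int.mul_ediv_cancel_left _ (by norm_num)
  have e3 : ((q : ℤ) ^ 2 - 5 * q + 4) / 6 = 3 * (j : ℤ) := by
    rw [show ((q : ℤ) ^ 2 - 5 * q + 4) = 6 * (3 * (j : ℤ)) from by
      rw [hq'']; linear_combination 9 * hjz]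
    exact Int.mul_ediv_cancel_left _ (by norm_num)
  constructor
  · rw [hPcard, e1, e2]
    exact hPc
  · rw [hP'card, e1, e3]
    linear_combination hP'c
end

section
/- Let q = 2^{2v+1} (so q even, q ≡ -1 mod 3). The number of unordered triples {t1,t2,t3} of pairwise distinct elements of F_q satisfying (t1+t2+t3) + (t1t2+t1t3+t2t3) = 0 equals (q^2-4q+4)/6. -/
open Finset

lemma perm_of_eq {α : Type*} [DecidableEq α] {x y z t1 t2 t3 : α}
    (hxy : x ≠ y) (hxz : x ≠ z) (hyz : y ≠ z)
    (heq : ({x, y, z} : Finset α) = {t1, t2, t3}) :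
    (x = t1 ∧ y = t2 ∧ z = t3) ∨ (x = t1 ∧ y = t3 ∧ z = t2) ∨
    (x = t2 ∧ y = t1 ∧ z = t3) ∨ (x = t2 ∧ y = t3 ∧ z = t1) ∨
    (x = t3 ∧ y = t1 ∧ z = t2) ∨ (x = t3 ∧ y = t2 ∧ z = t1) := by
  have hmem : ∀ w : α, w ∈ ({x, y, z} : Finset α) → (w = t1 ∨ w = t2 ∨ w = t3) := by
    intro w hw
    rw [heq] at hw
    simpa using hw
  have hx := hmem x (by simp)
  have hy := hmem y (by simp)
  have hz := hmem z (by simp)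
  rcases hx with rfl | rfl | rfl <;> rcases hy with rfl | rfl | rfl <;>
    rcases hz with rfl | rfl | rfl <;>
    first
      | exact absurd rfl hxy
      | exact absurd rfl hxz
      | exact absurd rfl hyz
      | exact Or.inl ⟨rfl, rfl, rfl⟩
      | exact Or.inr (Or.inl ⟨rfl, rfl, rfl⟩)
      | exact Or.inr (Or.inr (Or.inl ⟨rfl, rfl, rfl⟩))
      | exact Or.inr (Or.inr (Or.inr (Or.inl ⟨rfl, rfl, rfl⟩)))
      | exact Or.inr (Or.inr (Or.inr (Or.inr (Or.inl ⟨rfl, rfl, rfl⟩))))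
      | exact Or.inr (Or.inr (Or.inr (Or.inr (Or.inr ⟨rfl, rfl, rfl⟩))))

lemma card_six {α : Type*} [DecidableEq α] {t1 t2 t3 : α}
    (h12 : t1 ≠ t2) (h13 : t1 ≠ t3) (h23 : t2 ≠ t3) :
    (({(t1,t2,t3),(t1,t3,t2),(t2,t1,t3),(t2,t3,t1),(t3,t1,t2),(t3,t2,t1)} :
      Finset (α × α × α))).card = 6 := by
  have h21 := Ne.symm h12
  have h31 := Ne.symm h13
  have h32 := Ne.symm h23
  rw [card_insert_of_notMem (by simp [Prod.ext_iff, h12, h13, h23, h21, h31, h32]),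
    card_insert_of_notMem (by simp [Prod.ext_iff, h12, h13, h23, h21, h31, h32]),
    card_insert_of_notMem (by simp [Prod.ext_iff, h12, h13, h23, h21, h31, h32]),
    card_insert_of_notMem (by simp [Prod.ext_iff, h12, h13, h23, h21, h31, h32]),
    card_insert_of_notMem (by simp [Prod.ext_iff, h12, h13, h23, h21, h31, h32]),
    card_singleton]

lemma cardS (F : Type*) [Field F] [Fintype F] [DecidableEq F]
    (h2 : (2:F) = 0) (hroot : ∀ x : F, x^2 + x + 1 ≠ 0) (hcube : ∀ x : F, x^3 = 1 → x = 1) :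
    ((Finset.univ.filter (fun p : F × F =>
        p.1 ≠ p.2 ∧ p.1 + p.2 ≠ 1 ∧ p.2 ≠ p.1^2 ∧ p.1 ≠ p.2^2)).card : ℤ)
      = (Fintype.card F : ℤ)^2 - 4*(Fintype.card F) + 4 := by
  classical
  set q := Fintype.card F with hq
  have h01 : (0:F) ≠ 1 := zero_ne_one
  have hq2 : 2 ≤ q := Fintype.one_lt_card
  have hinj : Function.Injective (fun x : F => x^2) := by
    intro a b h
    simp only at h
    have hz : (a - b)^2 = 0 := by linear_combination h + (b^2 - a*b)*h2
    exact sub_eq_zero.mp (pow_eq_zero_iff (two_ne_zero) |>.mp hz)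
  let e : F ≃ F := Equiv.ofBijective _ (Finite.injective_iff_bijective.mp hinj)
  have he : ∀ x : F, e x = x^2 := fun x => rfl
  have hr : ∀ a : F, (e.symm a)^2 = a := by
    intro a; rw [← he]; exact e.apply_symm_apply a
  have hriff : ∀ a b : F, a = b^2 ↔ b = e.symm a := by
    intro a b
    rw [eq_comm, ← he, Equiv.eq_symm_apply, eq_comm]
  set V : F → Finset F := fun a => {a, 1+a, a^2, e.symm a} with hV
  have hfilter : ∀ a : F,
      (univ.filter fun b : F => a ≠ b ∧ a + b ≠ 1 ∧ b ≠ a^2 ∧ a ≠ b^2) = univ \ V a := by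
    intro a
    ext b
    simp only [mem_filter, mem_univ, true_and, mem_sdiff, hV, mem_insert, mem_singleton]
    have i1 : a ≠ b ↔ ¬ b = a := ⟨fun h hh => h hh.symm, fun h hh => h hh.symm⟩
    have i2 : a + b ≠ 1 ↔ ¬ b = 1 + a := by
      constructor
      · intro h hh; exact h (by linear_combination hh + a*h2)
      · intro h hh; exact h (by linear_combination hh - a*h2)
    have i4 : a ≠ b^2 ↔ ¬ b = e.symm a := not_congr (hriff a b)
    tauto
  have hcardV : ∀ a : F, a ≠ 0 → a ≠ 1 → (V a).card = 4 := by
    intro a ha0 ha1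
    have d1 : a ≠ 1 + a := fun h => h01 (by linear_combination h)
    have d2 : a ≠ a^2 := by
      intro h
      have hz : a * (a - 1) = 0 := by linear_combination -h
      rcases mul_eq_zero.mp hz with h' | h'
      · exact ha0 h'
      · exact ha1 (by linear_combination h')
    have d3 : a ≠ e.symm a := by
      intro h
      have hh := hr a
      rw [← h] at hh
      exact d2 hh.symm
    have d4 : 1 + a ≠ a^2 := by
      intro h
      exact hroot a (by linear_combination -h + (1+a)*h2)
    have d5 : 1 + a ≠ e.symm a := by
      intro h
      have hsq : (1+a)^2 = a := by rw [h, hr]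
      exact hroot a (by linear_combination hsq)
    have d6 : a^2 ≠ e.symm a := by
      intro h
      have h4 : a^4 = a := by
        have := congrArg (·^2) h
        simp only [hr] at this
        linear_combination this
      have h3 : a^3 = 1 := mul_left_cancel₀ ha0 (by linear_combination h4)
      exact ha1 (hcube a h3)
    simp only [hV, card_insert_of_notMem, mem_insert, mem_singleton]
    rw [card_insert_of_notMem (by simp [d1, d2, d3]),
       card_insert_of_notMem (by simp [d4, d5]),
       card_insert_of_notMem (by simp [d6]), card_singleton]
  have hV0 : (V 0).card = 2 := by
    have hr0 : e.symm 0 = 0 := by rw [Equiv.symm_apply_eq]; rw [he]; ring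
    have : V 0 = {0, 1} := by
      simp only [hV]
      rw [hr0]
      norm_num
      exact Finset.pair_comm 1 0
    rw [this, card_pair h01]
  have hV1 : (V 1).card = 2 := by
    have hr1 : e.symm 1 = 1 := by rw [Equiv.symm_apply_eq]; rw [he]; ring
    have : V 1 = {1, 1+1} := by
      simp only [hV]
      rw [hr1]
      norm_num
      exact Finset.pair_comm 2 1
    have h11 : (1:F) + 1 = 0 := by linear_combination h2
    rw [this, h11, card_pair (Ne.symm h01)]
  have hsum : (Finset.univ.filter (fun p : F × F =>
        p.1 ≠ p.2 ∧ p.1 + p.2 ≠ 1 ∧ p.2 ≠ p.1^2 ∧ p.1 ≠ p.2^2)).card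
      = ∑ a : F, (q - (V a).card) := by
    rw [card_filter, Fintype.sum_prod_type]
    refine Finset.sum_congr rfl (fun a _ => ?_)
    rw [← card_filter, hfilter a, card_sdiff_of_subset (subset_univ _), card_univ]
  have hVle : ∀ a : F, (V a).card ≤ q := fun a => by
    rw [hq, ← card_univ]; exact card_le_card (subset_univ _)
  have hcast : ((∑ a : F, (q - (V a).card) : ℕ) : ℤ)
      = ∑ a : F, ((q:ℤ) - ((V a).card : ℤ)) := by
    rw [Nat.cast_sum]
    exact Finset.sum_congr rfl (fun a _ => Nat.cast_sub (hVle a))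
  have hsplit : ∑ a : F, (((V a).card : ℤ))
      = ∑ a ∈ (univ \ ({0, 1} : Finset F)), (((V a).card : ℤ))
        + ∑ a ∈ ({0, 1} : Finset F), (((V a).card : ℤ)) :=
    (Finset.sum_sdiff (subset_univ _)).symm
  have hs1 : ∑ a ∈ ({0, 1} : Finset F), (((V a).card : ℤ)) = 4 := by
    rw [Finset.sum_pair h01, hV0, hV1]; norm_num
  have hs2 : ∑ a ∈ (univ \ ({0, 1} : Finset F)), (((V a).card : ℤ)) = 4 * ((q:ℤ) - 2) := by
    have hconst : ∀ a ∈ univ \ ({0, 1} : Finset F), (((V a).card : ℤ)) = (4:ℤ) := by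
      intro a ha
      simp only [mem_sdiff, mem_insert, mem_singleton, mem_univ, true_and] at ha
      push_neg at ha
      rw [hcardV a ha.1 ha.2]
      norm_num
    rw [Finset.sum_congr rfl hconst, Finset.sum_const,
      card_sdiff_of_subset (subset_univ _), card_univ, card_pair h01, nsmul_eq_mul, Nat.cast_sub hq2]
    push_cast; ring
  rw [hsum, hcast]
  rw [Finset.sum_sub_distrib, Finset.sum_const, card_univ, hsplit, hs1, hs2]
  rw [nsmul_eq_mul]
  ring

lemma cardO (F : Type*) [Field F] [Fintype F] [DecidableEq F]
    (h2 : (2:F) = 0) (hroot : ∀ x : F, x^2 + x + 1 ≠ 0) :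
    (Finset.univ.filter (fun p : F × F × F =>
        p.1 ≠ p.2.1 ∧ p.1 ≠ p.2.2 ∧ p.2.1 ≠ p.2.2 ∧
        (p.1 + p.2.1 + p.2.2) + (p.1 * p.2.1 + p.1 * p.2.2 + p.2.1 * p.2.2) = 0)).card
      = (Finset.univ.filter (fun p : F × F =>
        p.1 ≠ p.2 ∧ p.1 + p.2 ≠ 1 ∧ p.2 ≠ p.1^2 ∧ p.1 ≠ p.2^2)).card := by
  classical
  have hkey : ∀ t1 t2 t3 : F, t1 ≠ t3 → t2 ≠ t3 →
      (t1 + t2 + t3) + (t1 * t2 + t1 * t3 + t2 * t3) = 0 → t1 + t2 ≠ 1 := by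
    intro t1 t2 t3 h13 h23 hP h1
    have hprod : t1 * t2 = 1 := by linear_combination hP - (1+t3)*h1 - (1+t3)*h2
    exact hroot t1 (by linear_combination t1*h1 - hprod + t1*h2)
  have hden : ∀ t1 t2 : F, t1 + t2 ≠ 1 → (1 + t1 + t2) ≠ 0 := by
    intro t1 t2 h h0
    exact h (by linear_combination -h0 + (t1+t2)*h2)
  refine Finset.card_nbij' (fun p => (p.1, p.2.1))
    (fun p => (p.1, p.2, (p.1 + p.2 + p.1 * p.2) / (1 + p.1 + p.2))) ?_ ?_ ?_ ?_
  · intro x hp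
    obtain ⟨t1, t2, t3⟩ := x
    simp only [mem_coe, mem_filter, mem_univ, true_and] at hp ⊢
    obtain ⟨h12, h13, h23, hP⟩ := hp
    have h1 : t1 + t2 ≠ 1 := hkey t1 t2 t3 h13 h23 hP
    refine ⟨h12, h1, ?_, ?_⟩
    · intro ht
      have key : (t3 - t1) * (1 + t1 + t2) = 0 := by
        linear_combination hP - ht - (t1^2 + t1 + t1*t2)*h2
      rcases mul_eq_zero.mp key with h | h
      · exact h13 (sub_eq_zero.mp h).symm
      · exact hden t1 t2 h1 h
    · intro ht
      have key : (t3 - t2) * (1 + t1 + t2) = 0 := by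
        linear_combination hP - ht - (t2^2 + t2 + t1*t2)*h2
      rcases mul_eq_zero.mp key with h | h
      · exact h23 (sub_eq_zero.mp h).symm
      · exact hden t1 t2 h1 h
  · intro x hp
    obtain ⟨a, b⟩ := x
    simp only [mem_coe, mem_filter, mem_univ, true_and] at hp ⊢
    obtain ⟨hab, h1, hb, ha⟩ := hp
    have hd : (1 + a + b) ≠ 0 := hden a b h1
    set c : F := (a + b + a * b) / (1 + a + b) with hc
    have hcd : c * (1 + a + b) = a + b + a * b := by
      rw [hc, div_mul_cancel₀ _ hd]
    refine ⟨hab, ?_, ?_, ?_⟩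
    · intro h
      rw [← h] at hcd
      exact hb (by linear_combination hcd + (b - a^2)*h2)
    · intro h
      rw [← h] at hcd
      exact ha (by linear_combination hcd + (a - b^2)*h2)
    · linear_combination hcd + (a + b + a*b)*h2
  · intro x hp
    obtain ⟨t1, t2, t3⟩ := x
    simp only [mem_coe, mem_filter, mem_univ, true_and] at hp
    obtain ⟨h12, h13, h23, hP⟩ := hp
    have h1 : t1 + t2 ≠ 1 := hkey t1 t2 t3 h13 h23 hP
    have hd : (1 + t1 + t2) ≠ 0 := hden t1 t2 h1
    have ht3 : (t1 + t2 + t1 * t2) / (1 + t1 + t2) = t3 := by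
      rw [div_eq_iff hd]
      linear_combination hP - (t1*t3 + t2*t3 + t3)*h2
    simp only [ht3]
  · rintro ⟨a, b⟩ _
    rfl

lemma sixfold (F : Type*) [Field F] [Fintype F] [DecidableEq F] :
    (Finset.univ.filter (fun p : F × F × F =>
        p.1 ≠ p.2.1 ∧ p.1 ≠ p.2.2 ∧ p.2.1 ≠ p.2.2 ∧
        (p.1 + p.2.1 + p.2.2) + (p.1 * p.2.1 + p.1 * p.2.2 + p.2.1 * p.2.2) = 0)).card
      = 6 * (Finset.univ.filter (fun s : Finset F => s.card = 3 ∧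
          ∃ t1 t2 t3 : F, t1 ≠ t2 ∧ t1 ≠ t3 ∧ t2 ≠ t3 ∧ s = {t1, t2, t3} ∧
          (t1 + t2 + t3) + (t1 * t2 + t1 * t3 + t2 * t3) = 0)).card := by
  classical
  set O := (Finset.univ.filter (fun p : F × F × F =>
        p.1 ≠ p.2.1 ∧ p.1 ≠ p.2.2 ∧ p.2.1 ≠ p.2.2 ∧
        (p.1 + p.2.1 + p.2.2) + (p.1 * p.2.1 + p.1 * p.2.2 + p.2.1 * p.2.2) = 0)) with hO
  set T := (Finset.univ.filter (fun s : Finset F => s.card = 3 ∧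
          ∃ t1 t2 t3 : F, t1 ≠ t2 ∧ t1 ≠ t3 ∧ t2 ≠ t3 ∧ s = {t1, t2, t3} ∧
          (t1 + t2 + t3) + (t1 * t2 + t1 * t3 + t2 * t3) = 0)) with hT
  have H : ∀ p ∈ O, ({p.1, p.2.1, p.2.2} : Finset F) ∈ T := by
    rintro ⟨x, y, z⟩ hp
    simp only [hO, mem_filter, mem_univ, true_and] at hp
    obtain ⟨hxy, hxz, hyz, hP⟩ := hp
    simp only [hT, mem_filter, mem_univ, true_and]
    refine ⟨?_, x, y, z, hxy, hxz, hyz, rfl, hP⟩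
    rw [card_insert_of_notMem (by simp [hxy, hxz]),
      card_insert_of_notMem (by simp [hyz]), card_singleton]
  rw [Finset.card_eq_sum_card_fiberwise H]
  have fiber6 : ∀ s ∈ T,
      (O.filter fun p : F × F × F => ({p.1, p.2.1, p.2.2} : Finset F) = s).card = 6 := by
    intro s hs
    simp only [hT, mem_filter, mem_univ, true_and] at hs
    obtain ⟨hs3, t1, t2, t3, h12, h13, h23, hseq, hP⟩ := hs
    have hE : (O.filter fun p : F × F × F => ({p.1, p.2.1, p.2.2} : Finset F) = s)
        = ({(t1,t2,t3),(t1,t3,t2),(t2,t1,t3),(t2,t3,t1),(t3,t1,t2),(t3,t2,t1)} :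
            Finset (F × F × F)) := by
      ext ⟨x, y, z⟩
      simp only [hO, mem_filter, mem_univ, true_and, mem_insert, mem_singleton, Prod.mk.injEq]
      constructor
      · rintro ⟨⟨hxy, hxz, hyz, hPp⟩, heq⟩
        exact perm_of_eq hxy hxz hyz (heq.trans hseq)
      · rintro (⟨rfl, rfl, rfl⟩ | ⟨rfl, rfl, rfl⟩ | ⟨rfl, rfl, rfl⟩ |
          ⟨rfl, rfl, rfl⟩ | ⟨rfl, rfl, rfl⟩ | ⟨rfl, rfl, rfl⟩) <;>
          refine ⟨⟨?_, ?_, ?_, by linear_combination hP⟩, ?_⟩ <;>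
          first
            | assumption
            | exact Ne.symm h12
            | exact Ne.symm h13
            | exact Ne.symm h23
            | (rw [hseq]; all_goals ext w; simp only [mem_insert, mem_singleton]; constructor <;> rintro (rfl | rfl | rfl) <;> simp)
    rw [hE, card_six h12 h13 h23]
  rw [Finset.sum_congr rfl fiber6, Finset.sum_const, smul_eq_mul, mul_comm]

/-- Let `q = 2^(2v+1)`. The number of unordered triples `{t1,t2,t3}` of pairwise distinct
elements of `F_q` satisfying `(t1+t2+t3) + (t1t2+t1t3+t2t3) = 0` equals `(q²-4q+4)/6`. -/
theorem stmt14 (F : Type*) [Field F] [Fintype F] [DecidableEq F] (q v : ℕ)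
    (hq : Fintype.card F = q) (hqv : q = 2 ^ (2 * v + 1)) :
    (Nat.card {s : Finset F // s.card = 3 ∧ ∃ t1 t2 t3 : F, t1 ≠ t2 ∧ t1 ≠ t3 ∧ t2 ≠ t3 ∧
        s = {t1, t2, t3} ∧ (t1 + t2 + t3) + (t1 * t2 + t1 * t3 + t2 * t3) = 0} : ℤ)
      = ((q : ℤ) ^ 2 - 4 * q + 4) / 6 := by
  classical
  -- characteristic 2 facts
  obtain ⟨p, hcp⟩ := CharP.exists F
  obtain ⟨n, hp, hcard⟩ := FiniteField.card F p
  have hp2 : p = 2 := by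
    have hdvd : p ∣ 2 ^ (2*v+1) := by
      rw [← hqv, ← hq, hcard]; exact dvd_pow_self p n.pos.ne'
    exact (Nat.prime_dvd_prime_iff_eq hp Nat.prime_two).mp (Nat.Prime.dvd_of_dvd_pow hp hdvd)
  subst hp2
  have h2 : (2:F) = 0 := by exact_mod_cast CharP.cast_eq_zero F 2
  have hq1mod : q % 3 = 2 := by
    have h4 : (4:ℕ)^v % 3 = 1 := by
      rw [Nat.pow_mod]; simp
    have : q = 2 * 4 ^ v := by
      rw [hqv, pow_succ', pow_mul]
      norm_num
    omega
  have hq2 : 2 ≤ q := by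
    rw [← hq]; exact Fintype.one_lt_card
  have hcube : ∀ x : F, x^3 = 1 → x = 1 := by
    intro x hx3
    have hx0 : x ≠ 0 := by rintro rfl; simp at hx3
    have hxq : x ^ (q - 1) = 1 := by rw [← hq]; exact FiniteField.pow_card_sub_one_eq_one x hx0
    have h1 : orderOf x ∣ Nat.gcd 3 (q-1) :=
      Nat.dvd_gcd (orderOf_dvd_of_pow_eq_one hx3) (orderOf_dvd_of_pow_eq_one hxq)
    have hg : Nat.gcd 3 (q-1) = 1 := by
      have hnd : ¬ (3 ∣ (q-1)) := by omega
      have h3 : Nat.gcd 3 (q-1) ∣ 3 := Nat.gcd_dvd_left _ _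
      rcases (Nat.Prime.eq_one_or_self_of_dvd Nat.prime_three _ h3) with h | h
      · exact h
      · exact absurd (h ▸ Nat.gcd_dvd_right 3 (q-1)) hnd
    rw [hg, Nat.dvd_one, orderOf_eq_one_iff] at h1
    exact h1
  have hroot : ∀ x : F, x^2 + x + 1 ≠ 0 := by
    intro x hx
    have hx3 : x^3 = 1 := by linear_combination (x-1)*hx
    have := hcube x hx3
    subst this
    have h1 : (1:F) = 0 := by linear_combination hx - h2
    exact one_ne_zero h1
  -- combine the counting lemmas
  have hOS := cardO F h2 hroot
  have hsix := sixfold F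
  have hS := cardS F h2 hroot hcube
  set T := (Finset.univ.filter (fun s : Finset F => s.card = 3 ∧
          ∃ t1 t2 t3 : F, t1 ≠ t2 ∧ t1 ≠ t3 ∧ t2 ≠ t3 ∧ s = {t1, t2, t3} ∧
          (t1 + t2 + t3) + (t1 * t2 + t1 * t3 + t2 * t3) = 0)) with hT
  have hcardT : (Nat.card {s : Finset F // s.card = 3 ∧ ∃ t1 t2 t3 : F,
      t1 ≠ t2 ∧ t1 ≠ t3 ∧ t2 ≠ t3 ∧ s = {t1, t2, t3} ∧
      (t1 + t2 + t3) + (t1 * t2 + t1 * t3 + t2 * t3) = 0}) = T.card := by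
    rw [Nat.card_eq_fintype_card, hT, Fintype.card_subtype]
  have hkey : (6:ℤ) * (T.card : ℤ) = (q:ℤ)^2 - 4*(q:ℤ) + 4 := by
    have := hOS.symm.trans hsix
    have hcast : ((6 * T.card : ℕ) : ℤ)
        = ((Finset.univ.filter (fun p : F × F =>
            p.1 ≠ p.2 ∧ p.1 + p.2 ≠ 1 ∧ p.2 ≠ p.1^2 ∧ p.1 ≠ p.2^2)).card : ℤ) := by
      exact_mod_cast congrArg (fun m : ℕ => (m : ℤ)) this.symm
    rw [hS, hq] at hcast
    push_cast at hcast
    linarith [hcast]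
  rw [hcardT, ← Int.mul_ediv_cancel_left (T.card : ℤ) (show (6:ℤ) ≠ 0 by norm_num), hkey]
end

section
/- Let μ = (q^2-3q+2)/6 for q ≢ 0 (mod 3) (and μ = (q^2-3q)/6 for q ≡ 0 mod 3), and let C be the [q+1, q-3, 5]_q generalized doubly-extended Reed-Solomon code of covering radius 3 whose parity-check matrix has as columns the points of the twisted cubic. Then the μ-density γ_μ(C,3,q) = [C(q+1,3)(q-1)^3 - C(5,2)(q-1)C(q+1,5)] / [μ(q^4 - 1 - (q^2-1) - C(q+1,2)(q-1)^2)] satisfies γ_μ(C,3,q) > 1 and γ_μ(C,3,q) → 1 as q → ∞. -/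
open Filter

/-- The value of `μ`: `(q²-3q+2)/6` for `q ≢ 0 (mod 3)` and `(q²-3q)/6` for
`q ≡ 0 (mod 3)`. -/
noncomputable def muQ (q : ℕ) : ℚ :=
  if q % 3 = 0 then ((q : ℚ) ^ 2 - 3 * q) / 6 else ((q : ℚ) ^ 2 - 3 * q + 2) / 6

/-- The `μ`-density `γ_μ(C,3,q)` of the `[q+1, q-3, 5]_q` GDRS code `C` of covering
radius `3` associated with the twisted cubic:
`γ_μ = [C(q+1,3)(q-1)³ - C(5,2)(q-1)C(q+1,5)] / [μ(q⁴ - 1 - (q²-1) - C(q+1,2)(q-1)²)]`. -/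
noncomputable def gammaMu (q : ℕ) : ℚ :=
  (((q + 1).choose 3 : ℚ) * ((q : ℚ) - 1) ^ 3 -
      ((5).choose 2 : ℚ) * ((q : ℚ) - 1) * ((q + 1).choose 5 : ℚ)) /
    (muQ q * ((q : ℚ) ^ 4 - 1 - ((q : ℚ) ^ 2 - 1) -
      ((q + 1).choose 2 : ℚ) * ((q : ℚ) - 1) ^ 2))

private lemma choose2_cast (k : ℕ) :
    ((5 + k + 1).choose 2 : ℚ) = ((k:ℚ)+6)*((k:ℚ)+5)/2 := by
  have h := Nat.descFactorial_eq_factorial_mul_choose (5 + k + 1) 2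
  simp [Nat.descFactorial, Nat.factorial] at h
  have h2 : (((5 + k) * (5 + k + 1) : ℕ) : ℚ) = ((2 * (5 + k + 1).choose 2 : ℕ) : ℚ) := by
    exact_mod_cast congrArg (Nat.cast : ℕ → ℚ) h
  push_cast at h2
  linarith

private lemma choose3_cast (k : ℕ) :
    ((5 + k + 1).choose 3 : ℚ) = ((k:ℚ)+6)*((k:ℚ)+5)*((k:ℚ)+4)/6 := by
  have h := Nat.descFactorial_eq_factorial_mul_choose (5 + k + 1) 3
  simp [Nat.descFactorial, Nat.factorial] at h
  have h2 : (((4 + k) * ((5 + k) * (5 + k + 1)) : ℕ) : ℚ)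
      = ((6 * (5 + k + 1).choose 3 : ℕ) : ℚ) := by
    exact_mod_cast congrArg (Nat.cast : ℕ → ℚ) h
  push_cast at h2
  linarith

private lemma choose5_cast (k : ℕ) :
    ((5 + k + 1).choose 5 : ℚ)
      = ((k:ℚ)+6)*((k:ℚ)+5)*((k:ℚ)+4)*((k:ℚ)+3)*((k:ℚ)+2)/120 := by
  have h := Nat.descFactorial_eq_factorial_mul_choose (5 + k + 1) 5
  simp [Nat.descFactorial, Nat.factorial] at h
  rw [show 5 + k - 3 = 2 + k from by omega, show 5 + k - 2 = 3 + k from by omega] at h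
  have h2 : (((2 + k) * ((3 + k) * ((4 + k) * ((5 + k) * (5 + k + 1)))) : ℕ) : ℚ)
      = ((120 * (5 + k + 1).choose 5 : ℕ) : ℚ) := by
    exact_mod_cast congrArg (Nat.cast : ℕ → ℚ) h
  push_cast at h2
  linarith

private lemma gammaMu_bounds (q : ℕ) (hq : 5 ≤ q) :
    1 < gammaMu q ∧ gammaMu q ≤ 1 + 4 / (q : ℚ) := by
  obtain ⟨k, rfl⟩ := Nat.exists_eq_add_of_le hq
  set y : ℚ := (k : ℚ) with hy_def
  have hy : 0 ≤ y := Nat.cast_nonneg k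
  have hcast : ((5 + k : ℕ) : ℚ) = y + 5 := by push_cast; ring
  unfold gammaMu muQ
  rw [choose2_cast, choose3_cast, choose5_cast, hcast]
  have hchoose52 : ((5).choose 2 : ℚ) = 10 := by norm_num [Nat.choose]
  rw [hchoose52]
  by_cases h3 : (5 + k) % 3 = 0
  · rw [if_pos h3]
    have hD : 0 < (((y+5) ^ 2 - 3 * (y+5)) / 6) *
        ((y+5) ^ 4 - 1 - ((y+5) ^ 2 - 1) - ((y+6)*(y+5)/2) * ((y+5) - 1) ^ 2) := by
      nlinarith [sq_nonneg y, pow_nonneg hy 3, pow_nonneg hy 4, pow_nonneg hy 5,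
        pow_nonneg hy 6, mul_nonneg hy hy]
    constructor
    · rw [lt_div_iff₀ hD]
      nlinarith [sq_nonneg y, pow_nonneg hy 3, pow_nonneg hy 4, pow_nonneg hy 5,
        pow_nonneg hy 6, pow_nonneg hy 7]
    · have hx0 : (0:ℚ) < y + 5 := by linarith
      rw [show (1 : ℚ) + 4 / (y+5) = ((y+5) + 4) / (y+5) by field_simp,
        div_le_div_iff₀ hD hx0]
      nlinarith [sq_nonneg y, pow_nonneg hy 3, pow_nonneg hy 4, pow_nonneg hy 5,
        pow_nonneg hy 6, pow_nonneg hy 7]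
  · rw [if_neg h3]
    have hD : 0 < (((y+5) ^ 2 - 3 * (y+5) + 2) / 6) *
        ((y+5) ^ 4 - 1 - ((y+5) ^ 2 - 1) - ((y+6)*(y+5)/2) * ((y+5) - 1) ^ 2) := by
      nlinarith [sq_nonneg y, pow_nonneg hy 3, pow_nonneg hy 4, pow_nonneg hy 5,
        pow_nonneg hy 6, mul_nonneg hy hy]
    constructor
    · rw [lt_div_iff₀ hD]
      nlinarith [sq_nonneg y, pow_nonneg hy 3, pow_nonneg hy 4, pow_nonneg hy 5,
        pow_nonneg hy 6, pow_nonneg hy 7]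
    · have hx0 : (0:ℚ) < y + 5 := by linarith
      rw [show (1 : ℚ) + 4 / (y+5) = ((y+5) + 4) / (y+5) by field_simp,
        div_le_div_iff₀ hD hx0]
      nlinarith [sq_nonneg y, pow_nonneg hy 3, pow_nonneg hy 4, pow_nonneg hy 5,
        pow_nonneg hy 6, pow_nonneg hy 7]

/-- The `μ`-density of the GDRS `[q+1,q-3,5]_q 3` code associated with the twisted cubic
satisfies `γ_μ(C,3,q) > 1` and `γ_μ(C,3,q) → 1` as `q → ∞`: an asymptotically optimal
collection of multiple covering codes. -/
theorem stmt19 :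
    (∀ q : ℕ, 5 ≤ q → 1 < gammaMu q) ∧
    Tendsto gammaMu atTop (nhds 1) := by
  constructor
  · exact fun q hq => (gammaMu_bounds q hq).1
  · have hub : Tendsto (fun q : ℕ => 1 + 4 / (q : ℚ)) atTop (nhds 1) := by
      have h0 : Tendsto (fun q : ℕ => 4 / (q : ℚ)) atTop (nhds 0) := by
        have h1 := (tendsto_inv_atTop_zero (𝕜 := ℚ)).comp
          (tendsto_natCast_atTop_atTop (R := ℚ))
        have h4 := h1.const_mul (4 : ℚ)
        simpa [div_eq_mul_inv, Function.comp] using h4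
      simpa using tendsto_const_nhds.add h0
    refine tendsto_of_tendsto_of_tendsto_of_le_of_le' tendsto_const_nhds hub ?_ ?_
    · filter_upwards [eventually_ge_atTop 5] with q hq
      exact (gammaMu_bounds q hq).1.le
    · filter_upwards [eventually_ge_atTop 5] with q hq
      exact (gammaMu_bounds q hq).2
end
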